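/- arXiv:2004.07308 — 3 statements merged into one kernel-verified Lean document; each statement's English description precedes it below -/
import Mathlib

section
/- The class of shuffled joins of pure shifted ordered complexes — all ordered complexes (w,Σ) on a finite set I such that I is a disjoint union I_1 ∪ ⋯ ∪ I_q, Σ = Σ_1 * ⋯ * Σ_q, and each (w|I_j, Σ_j) is a pure shifted ordered complex — is a Hopf class. -/
namespace OrderedComplexes

variable {α : Type*} [DecidableEq α]

/-- A (downward closed) simplicial complex, as a finite set of faces. -/
def IsComplex (S : Finset (Finset α)) : Prop := ∀ σ ∈ S, ∀ τ ⊆ σ, τ ∈ S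

/-- `σ` is a facet (maximal face) of the complex `S`. -/
def IsFacet (S : Finset (Finset α)) (σ : Finset α) : Prop :=
  σ ∈ S ∧ ∀ τ ∈ S, σ ⊆ τ → σ = τ

/-- A complex is pure if all of its facets have the same cardinality. -/
def IsPure (S : Finset (Finset α)) : Prop :=
  ∀ σ τ, IsFacet S σ → IsFacet S τ → σ.card = τ.card

/-- The restriction `Σ|T = {σ ∈ Σ : σ ⊆ T}`. -/
def restrictC (S : Finset (Finset α)) (T : Finset α) : Finset (Finset α) :=
  S.filter (· ⊆ T)

/-- The link of `τ` in `Σ`: `{ρ ∈ Σ : ρ ∩ τ = ∅ and ρ ∪ τ ∈ Σ}`. -/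
def linkC (S : Finset (Finset α)) (τ : Finset α) : Finset (Finset α) :=
  S.filter fun ρ => Disjoint ρ τ ∧ ρ ∪ τ ∈ S

/-- The lexicographically smallest (with respect to the linear order `w`, encoded as a
duplicate-free list) facet of the complex `S`, computed greedily along `w`. -/
def lexMinFacet (w : List α) (S : Finset (Finset α)) : Finset α :=
  w.foldl (fun τ a => if insert a τ ∈ S then insert a τ else τ) ∅

/-- The contraction `Σ/A`: the link in `Σ` of the lexicographically smallest facet of the
restriction `Σ|A`. -/
def contractC (w : List α) (S : Finset (Finset α)) (A : Finset α) : Finset (Finset α) :=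
  linkC S (lexMinFacet w (restrictC S A))

/-- An ordered complex: a linear order `w` on a finite ground set (a duplicate-free list)
together with a simplicial complex whose faces are subsets of the ground set. -/
def IsOrderedComplex (w : List α) (S : Finset (Finset α)) : Prop :=
  w.Nodup ∧ (∀ σ ∈ S, σ ⊆ w.toFinset) ∧ IsComplex S

/-- The join of two complexes: `{σ₁ ∪ σ₂ : σ₁ ∈ Σ₁, σ₂ ∈ Σ₂}`. -/
def joinC (S₁ S₂ : Finset (Finset α)) : Finset (Finset α) :=
  (S₁ ×ˢ S₂).image fun p => p.1 ∪ p.2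

/-- `w` is a shuffle of the linear orders `w₁` and `w₂`: a linear order on the union of the
two ground sets restricting to `wᵢ` on each. -/
def IsShuffle (w₁ w₂ w : List α) : Prop :=
  w.Nodup ∧ w.toFinset = w₁.toFinset ∪ w₂.toFinset ∧
    w.filter (fun a => decide (a ∈ w₁.toFinset)) = w₁ ∧
    w.filter (fun a => decide (a ∈ w₂.toFinset)) = w₂

/-- A Hopf class: a class of pure ordered complexes closed under shuffled joins, and under
restriction and contraction by initial segments (with all such restrictions pure).
Here the initial segment of `w` of length `k` is `(w.take k).toFinset`, the order induced on
it is `w.take k`, and the order induced on its complement is `w.drop k`. -/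
def IsHopfClass (Q : Set (List α × Finset (Finset α))) : Prop :=
  (∀ p ∈ Q, IsOrderedComplex p.1 p.2 ∧ IsPure p.2) ∧
  (∀ p₁ ∈ Q, ∀ p₂ ∈ Q, Disjoint p₁.1.toFinset p₂.1.toFinset →
    ∀ w, IsShuffle p₁.1 p₂.1 w → (w, joinC p₁.2 p₂.2) ∈ Q) ∧
  (∀ p ∈ Q, ∀ k : ℕ,
    IsPure (restrictC p.2 (p.1.take k).toFinset) ∧
    (p.1.take k, restrictC p.2 (p.1.take k).toFinset) ∈ Q) ∧
  (∀ p ∈ Q, ∀ k : ℕ,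
    (p.1.drop k, contractC p.1 p.2 (p.1.take k).toFinset) ∈ Q)

/-- Order-decomposability: either `Σ` has exactly one facet, or `Σ` is pure and for every
nonempty proper initial segment `A` of `w` both `Σ|A` and `Σ/A` are pure and (with their
induced orders) order-decomposable. -/
inductive OrderDecomposable : List α → Finset (Finset α) → Prop
  | unique (w : List α) (S : Finset (Finset α)) (σ : Finset α)
      (hσ : IsFacet S σ) (huniq : ∀ τ, IsFacet S τ → τ = σ) :
      OrderDecomposable w S
  | pure (w : List α) (S : Finset (Finset α)) (hpure : IsPure S)
      (hres_pure : ∀ k : ℕ, 0 < k → k < w.length →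
        IsPure (restrictC S (w.take k).toFinset))
      (hcon_pure : ∀ k : ℕ, 0 < k → k < w.length →
        IsPure (contractC w S (w.take k).toFinset))
      (hres : ∀ k : ℕ, 0 < k → k < w.length →
        OrderDecomposable (w.take k) (restrictC S (w.take k).toFinset))
      (hcon : ∀ k : ℕ, 0 < k → k < w.length →
        OrderDecomposable (w.drop k) (contractC w S (w.take k).toFinset)) :
      OrderDecomposable w S


/-- An ordered complex `(w, Σ)` is shifted if replacing any vertex of a face by a smaller
vertex (with respect to `w`) yields another face. -/
def IsShifted (w : List α) (S : Finset (Finset α)) : Prop :=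
  ∀ σ ∈ S, ∀ e ∈ σ, ∀ f ∈ w.toFinset, f ∉ σ →
    w.idxOf f < w.idxOf e → insert f (σ.erase e) ∈ S

/-- `(w, Σ)` is a shuffled join of pure shifted ordered complexes: the ground set is a
disjoint union `I₁ ∪ ⋯ ∪ I_q`, `Σ = Σ₁ * ⋯ * Σ_q`, `w` restricts to `w_j` on each `I_j`,
and each `(w_j, Σ_j)` is a pure shifted ordered complex. -/
def IsShuffledJoinOfShifted (w : List α) (S : Finset (Finset α)) : Prop :=
  ∃ L : List (List α × Finset (Finset α)),
    w.Nodup ∧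
    (L.Pairwise fun q r => Disjoint q.1.toFinset r.1.toFinset) ∧
    w.toFinset = (L.map fun q => q.1.toFinset).foldr (· ∪ ·) ∅ ∧
    (∀ q ∈ L, w.filter (fun a => decide (a ∈ q.1.toFinset)) = q.1) ∧
    S = (L.map fun q => q.2).foldr joinC {∅} ∧
    ∀ q ∈ L, IsOrderedComplex q.1 q.2 ∧ IsPure q.2 ∧ IsShifted q.1 q.2

lemma mem_joinC {S₁ S₂ : Finset (Finset α)} {σ : Finset α} :
    σ ∈ joinC S₁ S₂ ↔ ∃ σ₁ ∈ S₁, ∃ σ₂ ∈ S₂, σ = σ₁ ∪ σ₂ := by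
  simp only [joinC, Finset.mem_image, Finset.mem_product, Prod.exists]
  constructor
  · rintro ⟨a, b, ⟨h1, h2⟩, rfl⟩; exact ⟨a, h1, b, h2, rfl⟩
  · rintro ⟨a, h1, b, h2, rfl⟩; exact ⟨a, b, ⟨h1, h2⟩, rfl⟩

lemma pairwise_forall_ne {L : List (List α × Finset (Finset α))}
    (h : L.Pairwise fun q r => Disjoint q.1.toFinset r.1.toFinset) :
    ∀ q ∈ L, ∀ r ∈ L, q ≠ r → Disjoint q.1.toFinset r.1.toFinset := by
  intro q hq r hr hne
  haveI : Std.Symm (fun q r : List α × Finset (Finset α) => Disjoint q.1.toFinset r.1.toFinset) :=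
    ⟨fun _ _ h => h.symm⟩
  exact h.forall hq hr hne

def grounds (L : List (List α × Finset (Finset α))) : Finset α :=
  (L.map fun q => q.1.toFinset).foldr (· ∪ ·) ∅

def joins (L : List (List α × Finset (Finset α))) : Finset (Finset α) :=
  (L.map fun q => q.2).foldr joinC {∅}

lemma mem_grounds {L : List (List α × Finset (Finset α))} {a : α} :
    a ∈ grounds L ↔ ∃ q ∈ L, a ∈ q.1.toFinset := by
  induction L with
  | nil => simp [grounds]
  | cons q L ih => simp [grounds] at ih ⊢; rw [ih]

def GoodL (L : List (List α × Finset (Finset α))) : Prop :=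
  (L.Pairwise fun q r => Disjoint q.1.toFinset r.1.toFinset) ∧
    ∀ q ∈ L, ∀ σ ∈ q.2, σ ⊆ q.1.toFinset

lemma GoodL.tail {q} {L : List (List α × Finset (Finset α))} (h : GoodL (q :: L)) : GoodL L :=
  ⟨(List.pairwise_cons.mp h.1).2, fun r hr => h.2 r (List.mem_cons_of_mem q hr)⟩

lemma GoodL.head_disj {q} {L : List (List α × Finset (Finset α))} (h : GoodL (q :: L)) :
    Disjoint q.1.toFinset (grounds L) := by
  rw [Finset.disjoint_right]
  intro a ha hq
  obtain ⟨r, hr, har⟩ := mem_grounds.mp ha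
  exact Finset.disjoint_left.mp ((List.pairwise_cons.mp h.1).1 r hr) hq har

lemma mem_joins {L : List (List α × Finset (Finset α))} (hL : GoodL L) {σ : Finset α} :
    σ ∈ joins L ↔ σ ⊆ grounds L ∧ ∀ q ∈ L, σ ∩ q.1.toFinset ∈ q.2 := by
  induction L generalizing σ with
  | nil => simp [joins, grounds, Finset.subset_empty]
  | cons q L ih =>
    have hdisj := hL.head_disj
    have ih : ∀ {σ : Finset α}, σ ∈ joins L ↔ σ ⊆ grounds L ∧ ∀ q ∈ L, σ ∩ q.1.toFinset ∈ q.2 :=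
      fun {σ} => ih hL.tail
    have hjoin : joins (q :: L) = joinC q.2 (joins L) := rfl
    have hgr : grounds (q :: L) = q.1.toFinset ∪ grounds L := rfl
    rw [hjoin, hgr, mem_joinC]
    constructor
    · rintro ⟨σ₁, h1, σ₂, h2, rfl⟩
      obtain ⟨h2g, h2c⟩ := ih.mp h2
      have hσ₁g : σ₁ ⊆ q.1.toFinset := hL.2 q List.mem_cons_self σ₁ h1
      have hσ₂q : σ₂ ∩ q.1.toFinset = ∅ := by
        rw [← Finset.disjoint_iff_inter_eq_empty]
        exact (Finset.disjoint_of_subset_left h2g hdisj.symm)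
      constructor
      · exact Finset.union_subset (hσ₁g.trans Finset.subset_union_left)
          (h2g.trans Finset.subset_union_right)
      · intro r hr
        rcases List.mem_cons.mp hr with rfl | hr
        · rw [Finset.union_inter_distrib_right, hσ₂q,
            Finset.inter_eq_left.mpr hσ₁g, Finset.union_empty]
          exact h1
        · have hqr : Disjoint q.1.toFinset r.1.toFinset := (List.pairwise_cons.mp hL.1).1 r hr
          have : σ₁ ∩ r.1.toFinset = ∅ := by
            rw [← Finset.disjoint_iff_inter_eq_empty]
            exact Finset.disjoint_of_subset_left hσ₁g hqr
          rw [Finset.union_inter_distrib_right, this, Finset.empty_union]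
          exact h2c r hr
    · rintro ⟨hg, hc⟩
      refine ⟨σ ∩ q.1.toFinset, hc q List.mem_cons_self, σ \ q.1.toFinset, ?_, ?_⟩
      · rw [ih]
        constructor
        · intro a ha
          have := hg (Finset.mem_sdiff.mp ha).1
          rcases Finset.mem_union.mp this with h | h
          · exact absurd h (Finset.mem_sdiff.mp ha).2
          · exact h
        · intro r hr
          have hqr : Disjoint q.1.toFinset r.1.toFinset := (List.pairwise_cons.mp hL.1).1 r hr
          have : σ \ q.1.toFinset ∩ r.1.toFinset = σ ∩ r.1.toFinset := by
            ext a
            simp only [Finset.mem_inter, Finset.mem_sdiff]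
            constructor
            · rintro ⟨⟨h1, _⟩, h2⟩; exact ⟨h1, h2⟩
            · rintro ⟨h1, h2⟩; exact ⟨⟨h1, fun hq => Finset.disjoint_left.mp hqr hq h2⟩, h2⟩
          rw [this]; exact hc r (List.mem_cons_of_mem q hr)
      · ext a
        simp only [Finset.mem_union, Finset.mem_inter, Finset.mem_sdiff]
        tauto

lemma isComplex_joins {L : List (List α × Finset (Finset α))} (hL : GoodL L)
    (hc : ∀ q ∈ L, IsComplex q.2) : IsComplex (joins L) := by
  intro σ hσ τ hτ
  rw [mem_joins hL] at hσ ⊢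
  exact ⟨hτ.trans hσ.1, fun q hq => hc q hq _ (hσ.2 q hq) _
    (Finset.inter_subset_inter_right hτ)⟩

lemma card_components {L : List (List α × Finset (Finset α))} (hL : GoodL L)
    {σ : Finset α} (hσ : σ ⊆ grounds L) :
    σ.card = (L.map fun q => (σ ∩ q.1.toFinset).card).sum := by
  induction L generalizing σ with
  | nil => simp [grounds, Finset.subset_empty] at hσ; simp [hσ]
  | cons q L ih =>
    have hgr : grounds (q :: L) = q.1.toFinset ∪ grounds L := rfl
    rw [hgr] at hσ
    have hsplit : σ = (σ ∩ q.1.toFinset) ∪ (σ \ q.1.toFinset) := by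
      ext a; simp only [Finset.mem_union, Finset.mem_inter, Finset.mem_sdiff]; tauto
    have hdisj2 : Disjoint (σ ∩ q.1.toFinset) (σ \ q.1.toFinset) := by
      rw [Finset.disjoint_left]; intro a ha hb
      exact (Finset.mem_sdiff.mp hb).2 (Finset.mem_inter.mp ha).2
    have hsub : σ \ q.1.toFinset ⊆ grounds L := by
      intro a ha
      rcases Finset.mem_union.mp (hσ (Finset.mem_sdiff.mp ha).1) with h | h
      · exact absurd h (Finset.mem_sdiff.mp ha).2
      · exact h
    have hcomp : ∀ r ∈ L, (σ \ q.1.toFinset) ∩ r.1.toFinset = σ ∩ r.1.toFinset := by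
      intro r hr
      have hqr := (List.pairwise_cons.mp hL.1).1 r hr
      ext a
      simp only [Finset.mem_inter, Finset.mem_sdiff]
      exact ⟨fun ⟨⟨h1, _⟩, h2⟩ => ⟨h1, h2⟩,
        fun ⟨h1, h2⟩ => ⟨⟨h1, fun hq => Finset.disjoint_left.mp hqr hq h2⟩, h2⟩⟩
    calc σ.card = (σ ∩ q.1.toFinset).card + (σ \ q.1.toFinset).card := by
          rw [← Finset.card_union_of_disjoint hdisj2, ← hsplit]
      _ = (σ ∩ q.1.toFinset).card + (L.map fun r => ((σ \ q.1.toFinset) ∩ r.1.toFinset).card).sum := by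
          rw [ih hL.tail hsub]
      _ = ((q :: L).map fun r => (σ ∩ r.1.toFinset).card).sum := by
          simp only [List.map_cons, List.sum_cons]
          congr 1
          exact congrArg List.sum (List.map_congr_left fun r hr => by rw [hcomp r hr])

lemma mem_grounds_of_mem {L : List (List α × Finset (Finset α))} {q} (hq : q ∈ L) :
    q.1.toFinset ⊆ grounds L := fun a ha => mem_grounds.mpr ⟨q, hq, ha⟩

lemma facet_components {L : List (List α × Finset (Finset α))} (hL : GoodL L)
    {σ : Finset α} (hf : IsFacet (joins L) σ) :
    ∀ q ∈ L, IsFacet q.2 (σ ∩ q.1.toFinset) := by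
  intro q hq
  obtain ⟨hg, hcomp⟩ := (mem_joins hL).mp hf.1
  refine ⟨hcomp q hq, ?_⟩
  intro γ hγ hsub
  have hγg : γ ⊆ q.1.toFinset := hL.2 q hq γ hγ
  set σ' := (σ \ q.1.toFinset) ∪ γ with hσ'
  have hσ'mem : σ' ∈ joins L := by
    rw [mem_joins hL]
    constructor
    · exact Finset.union_subset ((Finset.sdiff_subset).trans hg)
        (hγg.trans (mem_grounds_of_mem hq))
    · intro r hr
      by_cases hqr : q = r
      · subst hqr
        have h1 : (σ \ q.1.toFinset) ∩ q.1.toFinset = ∅ := by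
          ext a; simp only [Finset.mem_inter, Finset.mem_sdiff, Finset.notMem_empty]; tauto
        rw [Finset.union_inter_distrib_right, h1, Finset.empty_union,
          Finset.inter_eq_left.mpr hγg]
        exact hγ
      · have hd : Disjoint q.1.toFinset r.1.toFinset :=
          pairwise_forall_ne hL.1 q hq r hr hqr
        have h1 : γ ∩ r.1.toFinset = ∅ := by
          rw [← Finset.disjoint_iff_inter_eq_empty]
          exact Finset.disjoint_of_subset_left hγg hd
        have h2 : (σ \ q.1.toFinset) ∩ r.1.toFinset = σ ∩ r.1.toFinset := by
          ext a
          simp only [Finset.mem_inter, Finset.mem_sdiff]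
          exact ⟨fun ⟨⟨ha, _⟩, hb⟩ => ⟨ha, hb⟩,
            fun ⟨ha, hb⟩ => ⟨⟨ha, fun hc => Finset.disjoint_left.mp hd hc hb⟩, hb⟩⟩
        rw [Finset.union_inter_distrib_right, h1, h2, Finset.union_empty]
        exact hcomp r hr
  have hσsub : σ ⊆ σ' := by
    intro a ha
    by_cases haq : a ∈ q.1.toFinset
    · exact Finset.mem_union_right _ (hsub (Finset.mem_inter.mpr ⟨ha, haq⟩))
    · exact Finset.mem_union_left _ (Finset.mem_sdiff.mpr ⟨ha, haq⟩)
  have := hf.2 σ' hσ'mem hσsub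
  rw [this, hσ', Finset.union_inter_distrib_right]
  have h1 : (σ \ q.1.toFinset) ∩ q.1.toFinset = ∅ := by
    ext a; simp only [Finset.mem_inter, Finset.mem_sdiff, Finset.notMem_empty]; tauto
  rw [h1, Finset.empty_union, Finset.inter_eq_left.mpr hγg]

lemma isPure_joins {L : List (List α × Finset (Finset α))} (hL : GoodL L)
    (hp : ∀ q ∈ L, IsPure q.2) : IsPure (joins L) := by
  intro σ τ hσ hτ
  rw [card_components hL ((mem_joins hL).mp hσ.1).1,
    card_components hL ((mem_joins hL).mp hτ.1).1]
  congr 1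
  exact List.map_congr_left fun q hq =>
    hp q hq _ _ (facet_components hL hσ q hq) (facet_components hL hτ q hq)

lemma mem_restrictC {S : Finset (Finset α)} {T σ} :
    σ ∈ restrictC S T ↔ σ ∈ S ∧ σ ⊆ T := by simp [restrictC]

lemma mem_linkC {S : Finset (Finset α)} {τ σ} :
    σ ∈ linkC S τ ↔ σ ∈ S ∧ Disjoint σ τ ∧ σ ∪ τ ∈ S := by simp [linkC]

lemma isComplex_restrictC {S : Finset (Finset α)} (hS : IsComplex S) (T : Finset α) :
    IsComplex (restrictC S T) := by
  intro σ hσ τ hτ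
  rw [mem_restrictC] at hσ ⊢
  exact ⟨hS σ hσ.1 τ hτ, hτ.trans hσ.2⟩

lemma isComplex_linkC {S : Finset (Finset α)} (hS : IsComplex S) (τ : Finset α) :
    IsComplex (linkC S τ) := by
  intro σ hσ ρ hρ
  rw [mem_linkC] at hσ ⊢
  exact ⟨hS σ hσ.1 ρ hρ, Finset.disjoint_of_subset_left hρ hσ.2.1,
    hS _ hσ.2.2 _ (Finset.union_subset_union_left hρ)⟩

section Greedy
variable (R : Finset (Finset α))

def gstep (τ : Finset α) (a : α) : Finset α := if insert a τ ∈ R then insert a τ else τ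

lemma lexMinFacet_eq_foldl (w : List α) : lexMinFacet w R = w.foldl (gstep R) ∅ := rfl

lemma subset_gfold (l : List α) (τ : Finset α) : τ ⊆ l.foldl (gstep R) τ := by
  induction l generalizing τ with
  | nil => exact fun a h => h
  | cons b l ih =>
    refine subset_trans ?_ (ih (gstep R τ b))
    unfold gstep; split
    · exact Finset.subset_insert _ _
    · exact fun a h => h

lemma gfold_mem (l : List α) (τ : Finset α) (hτ : τ ∈ R) : l.foldl (gstep R) τ ∈ R := by
  induction l generalizing τ with
  | nil => exact hτ
  | cons b l ih =>
    refine ih _ ?_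
    unfold gstep; split
    · assumption
    · exact hτ

lemma gfold_subset (l : List α) (τ : Finset α) : l.foldl (gstep R) τ ⊆ τ ∪ l.toFinset := by
  induction l generalizing τ with
  | nil => simp
  | cons b l ih =>
    refine (ih (gstep R τ b)).trans ?_
    intro a ha
    simp only [List.toFinset_cons, Finset.mem_union, Finset.mem_insert] at *
    unfold gstep at ha
    split at ha
    · rcases ha with h | h
      · rcases Finset.mem_insert.mp h with h | h
        · exact Or.inr (Or.inl h)
        · exact Or.inl h
      · exact Or.inr (Or.inr h)
    · tauto

lemma gfold_maximal (hR : IsComplex R) (l : List α) (τ : Finset α) :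
    ∀ a ∈ l, insert a (l.foldl (gstep R) τ) ∈ R → a ∈ l.foldl (gstep R) τ := by
  induction l generalizing τ with
  | nil => intro a ha; exact absurd ha List.not_mem_nil
  | cons b l ih =>
    intro a ha hins
    rcases List.mem_cons.mp ha with rfl | ha'
    · by_cases hb : insert a τ ∈ R
      · have : a ∈ gstep R τ a := by unfold gstep; rw [if_pos hb]; exact Finset.mem_insert_self a τ
        exact subset_gfold R l _ this
      · have hstep : gstep R τ a = τ := by unfold gstep; rw [if_neg hb]
        have : insert a τ ∈ R := by
          refine hR _ hins _ ?_
          exact Finset.insert_subset_insert a (by rw [List.foldl_cons, hstep]; exact subset_gfold R l τ)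
        exact absurd this hb
    · exact ih (gstep R τ b) a ha' hins

lemma lexMinFacet_isFacet {v : List α} (hR : IsComplex R) (hemp : ∅ ∈ R)
    (hg : ∀ σ ∈ R, σ ⊆ v.toFinset) : IsFacet R (lexMinFacet v R) := by
  rw [lexMinFacet_eq_foldl]
  refine ⟨gfold_mem R v ∅ hemp, ?_⟩
  intro γ hγ hsub
  by_contra hne
  obtain ⟨a, haγ, hat⟩ := Finset.exists_of_ssubset (lt_of_le_of_ne hsub hne)
  have hav : a ∈ v := List.mem_toFinset.mp (hg γ hγ haγ)
  have : insert a (v.foldl (gstep R) ∅) ∈ R :=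
    hR γ hγ _ (Finset.insert_subset haγ hsub)
  exact hat (gfold_maximal R hR v ∅ a hav this)

lemma lexMinFacet_subset {v : List α} : lexMinFacet v R ⊆ v.toFinset := by
  rw [lexMinFacet_eq_foldl]
  have := gfold_subset R v ∅
  rwa [Finset.empty_union] at this

end Greedy

section Index
variable {v : List α} {k : ℕ}

lemma indexOf_take {a : α} (ha : a ∈ v.take k) : v.idxOf a = (v.take k).idxOf a := by
  conv_lhs => rw [← List.take_append_drop k v]
  exact List.idxOf_append_of_mem ha

lemma not_mem_take_of_drop (hv : v.Nodup) {a : α} (ha : a ∈ v.drop k) : a ∉ v.take k := by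
  intro h
  have := List.take_append_drop k v
  have hnd : (v.take k ++ v.drop k).Nodup := by rw [this]; exact hv
  exact (List.disjoint_of_nodup_append hnd) h ha

lemma indexOf_drop (hv : v.Nodup) {a : α} (ha : a ∈ v.drop k) :
    v.idxOf a = (v.take k).length + (v.drop k).idxOf a := by
  conv_lhs => rw [← List.take_append_drop k v]
  exact List.idxOf_append_of_notMem (not_mem_take_of_drop hv ha)

lemma indexOf_lt_of_take_of_not_take (hv : v.Nodup) {a b : α}
    (ha : a ∈ v.take k) (hb : b ∈ v) (hbt : b ∉ v.take k) :
    v.idxOf a < v.idxOf b := by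
  have hbd : b ∈ v.drop k := by
    have := List.take_append_drop k v
    rw [← this] at hb
    rcases List.mem_append.mp hb with h | h
    · exact absurd h hbt
    · exact h
  rw [indexOf_take ha, indexOf_drop hv hbd]
  calc (v.take k).idxOf a < (v.take k).length := List.idxOf_lt_length_iff.mpr ha
    _ ≤ (v.take k).length + (v.drop k).idxOf b := Nat.le_add_right _ _

lemma drop_indexOf_lt (hv : v.Nodup) {a b : α} (ha : a ∈ v.drop k) (hb : b ∈ v.drop k)
    (h : (v.drop k).idxOf a < (v.drop k).idxOf b) : v.idxOf a < v.idxOf b := by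
  rw [indexOf_drop hv ha, indexOf_drop hv hb]
  omega

lemma toFinset_drop_eq (hv : v.Nodup) :
    (v.drop k).toFinset = v.toFinset \ (v.take k).toFinset := by
  ext a
  simp only [List.mem_toFinset, Finset.mem_sdiff]
  constructor
  · intro h
    refine ⟨?_, fun ht => not_mem_take_of_drop hv h ht⟩
    have h1 : a ∈ v.take k ++ v.drop k := List.mem_append.mpr (Or.inr h)
    rwa [List.take_append_drop] at h1
  · rintro ⟨h1, h2⟩
    rw [← List.take_append_drop k v] at h1
    rcases List.mem_append.mp h1 with h | h
    · exact absurd h h2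
    · exact h

end Index

section Single
variable {v : List α} {T : Finset (Finset α)} {k : ℕ}

lemma exists_facet_above (hc : IsComplex T) {σ : Finset α} (hσ : σ ∈ T) :
    ∃ ρ, σ ⊆ ρ ∧ IsFacet T ρ := by
  have hne : (T.filter (σ ⊆ ·)).Nonempty := ⟨σ, Finset.mem_filter.mpr ⟨hσ, Finset.Subset.refl σ⟩⟩
  obtain ⟨ρ, hρ, hmax⟩ := Finset.exists_max_image (T.filter (σ ⊆ ·)) Finset.card hne
  rw [Finset.mem_filter] at hρ
  refine ⟨ρ, hρ.2, hρ.1, ?_⟩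
  intro γ hγ hsub
  have hγm : γ ∈ T.filter (σ ⊆ ·) := Finset.mem_filter.mpr ⟨hγ, hρ.2.trans hsub⟩
  exact Finset.eq_of_subset_of_card_le hsub (hmax γ hγm)

/-- Restriction to an initial segment is an ordered complex. -/
lemma restrict_ordered (hT : IsOrderedComplex v T) :
    IsOrderedComplex (v.take k) (restrictC T (v.take k).toFinset) := by
  refine ⟨hT.1.sublist (List.take_sublist k v), ?_, isComplex_restrictC hT.2.2 _⟩
  intro σ hσ
  exact (mem_restrictC.mp hσ).2

/-- Restriction to an initial segment is shifted. -/
lemma restrict_shifted (hT : IsOrderedComplex v T) (hsh : IsShifted v T) :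
    IsShifted (v.take k) (restrictC T (v.take k).toFinset) := by
  intro σ hσ e he f hf hfσ hidx
  rw [mem_restrictC] at hσ
  have heA : e ∈ v.take k := List.mem_toFinset.mp (hσ.2 he)
  have hfA : f ∈ v.take k := List.mem_toFinset.mp hf
  have hfv : f ∈ v.toFinset := List.mem_toFinset.mpr ((List.take_sublist k v).mem (List.mem_toFinset.mp hf))
  have hidx' : v.idxOf f < v.idxOf e := by
    rw [indexOf_take hfA, indexOf_take heA]; exact hidx
  refine mem_restrictC.mpr ⟨hsh σ hσ.1 e he f hfv hfσ hidx', ?_⟩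
  exact Finset.insert_subset hf ((Finset.erase_subset e σ).trans hσ.2)

/-- Restriction of a pure shifted complex to an initial segment is pure. -/
lemma restrict_pure (hT : IsOrderedComplex v T) (hp : IsPure T) (hsh : IsShifted v T) :
    IsPure (restrictC T (v.take k).toFinset) := by
  set A := (v.take k).toFinset with hA
  -- key: any facet of the restriction either is a facet of T, or contains every facet
  have key : ∀ σ τ, IsFacet (restrictC T A) σ → IsFacet (restrictC T A) τ →
      ¬ (τ ⊆ σ) → IsFacet T σ := by
    intro σ τ hσ hτ hns
    obtain ⟨x, hxτ, hxσ⟩ := Finset.not_subset.mp hns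
    obtain ⟨ρ, hσρ, hρf⟩ := exists_facet_above hT.2.2 (mem_restrictC.mp hσ.1).1
    have hρA : ∀ y ∈ ρ, y ∉ A → True := fun _ _ _ => trivial
    -- every element of ρ \ σ is outside A
    have hout : ∀ y ∈ ρ, y ∉ σ → y ∉ A := by
      intro y hy hyσ hyA
      have : insert y σ ∈ restrictC T A := by
        rw [mem_restrictC]
        exact ⟨hT.2.2 ρ hρf.1 _ (Finset.insert_subset hy hσρ),
          Finset.insert_subset hyA (mem_restrictC.mp hσ.1).2⟩
      have := hσ.2 _ this (Finset.subset_insert y σ)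
      exact hyσ (this ▸ Finset.mem_insert_self y σ)
    -- suppose ρ ≠ σ; then we can shift and contradict maximality of σ
    by_cases hρσ : ρ = σ
    · rwa [hρσ] at hρf
    · exfalso
      have : ∃ y ∈ ρ, y ∉ σ := by
        by_contra h
        push_neg at h
        exact hρσ (Finset.Subset.antisymm h hσρ)
      obtain ⟨y, hyρ, hyσ⟩ := this
      have hyA : y ∉ A := hout y hyρ hyσ
      have hxA : x ∈ A := (mem_restrictC.mp hτ.1).2 hxτ
      have hxρ : x ∉ ρ := fun hxρ => (hout x hxρ hxσ) hxA
      have hyv : y ∈ v := List.mem_toFinset.mp (hT.2.1 ρ hρf.1 hyρ)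
      have hxv : x ∈ v.toFinset := hT.2.1 τ (mem_restrictC.mp hτ.1).1 hxτ
      have hidx : v.idxOf x < v.idxOf y :=
        indexOf_lt_of_take_of_not_take hT.1 (List.mem_toFinset.mp hxA) hyv
          (fun h => hyA (List.mem_toFinset.mpr h))
      have hshift : insert x (ρ.erase y) ∈ T := hsh ρ hρf.1 y hyρ x hxv hxρ hidx
      -- then insert x σ ∈ restrictC T A, contradicting σ facet
      have hσsub : σ ⊆ ρ.erase y := fun z hz =>
        Finset.mem_erase.mpr ⟨fun hzy => hyσ (hzy ▸ hz), hσρ hz⟩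
      have : insert x σ ∈ restrictC T A := by
        rw [mem_restrictC]
        exact ⟨hT.2.2 _ hshift _ (Finset.insert_subset_insert x hσsub),
          Finset.insert_subset hxA (mem_restrictC.mp hσ.1).2⟩
      have heq := hσ.2 _ this (Finset.subset_insert x σ)
      exact hxσ (heq ▸ Finset.mem_insert_self x σ)
  intro σ τ hσ hτ
  by_cases hsub : τ ⊆ σ
  · rw [hτ.2 σ hσ.1 hsub]
  · by_cases hsub2 : σ ⊆ τ
    · rw [hσ.2 τ hτ.1 hsub2]
    · exact hp σ τ (key σ τ hσ hτ hsub) (key τ σ hτ hσ hsub2)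

end Single

section Link
variable {v : List α} {T : Finset (Finset α)} {k : ℕ} {τ : Finset α}

/-- Faces of the link of a facet of an initial restriction avoid the initial segment. -/
lemma link_avoids (hT : IsOrderedComplex v T)
    (hτ : IsFacet (restrictC T (v.take k).toFinset) τ) {ρ : Finset α}
    (hρ : ρ ∈ linkC T τ) : ∀ x ∈ ρ, x ∉ (v.take k).toFinset := by
  intro x hxρ hxA
  rw [mem_linkC] at hρ
  have hxτ : x ∉ τ := Finset.disjoint_left.mp hρ.2.1 hxρ
  have : insert x τ ∈ restrictC T (v.take k).toFinset := by
    rw [mem_restrictC]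
    refine ⟨hT.2.2 _ hρ.2.2 _ ?_, Finset.insert_subset hxA (mem_restrictC.mp hτ.1).2⟩
    exact Finset.insert_subset (Finset.mem_union_left _ hxρ) Finset.subset_union_right
  have heq := hτ.2 _ this (Finset.subset_insert x τ)
  exact hxτ (heq ▸ Finset.mem_insert_self x τ)

lemma link_ordered (hT : IsOrderedComplex v T)
    (hτ : IsFacet (restrictC T (v.take k).toFinset) τ) :
    IsOrderedComplex (v.drop k) (linkC T τ) := by
  refine ⟨hT.1.sublist (List.drop_sublist k v), ?_, isComplex_linkC hT.2.2 τ⟩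
  intro ρ hρ x hxρ
  rw [toFinset_drop_eq hT.1]
  exact Finset.mem_sdiff.mpr ⟨hT.2.1 ρ (mem_linkC.mp hρ).1 hxρ, link_avoids hT hτ hρ x hxρ⟩

lemma link_shifted (hT : IsOrderedComplex v T) (hsh : IsShifted v T)
    (hτ : IsFacet (restrictC T (v.take k).toFinset) τ) :
    IsShifted (v.drop k) (linkC T τ) := by
  intro ρ hρ e he f hf hfρ hidx
  have hρl := mem_linkC.mp hρ
  have hτA : τ ⊆ (v.take k).toFinset := (mem_restrictC.mp hτ.1).2
  have hfd : f ∈ v.drop k := List.mem_toFinset.mp hf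
  have hfv : f ∈ v.toFinset := by
    rw [toFinset_drop_eq hT.1] at hf
    exact (Finset.mem_sdiff.mp hf).1
  have hfτ : f ∉ τ := fun h => (Finset.mem_sdiff.mp ((toFinset_drop_eq hT.1) ▸ hf)).2 (hτA h)
  have heρτ : e ∈ ρ ∪ τ := Finset.mem_union_left _ he
  have heτ : e ∉ τ := fun h =>
    link_avoids hT hτ hρ e he (hτA h)
  have hed : e ∈ v.drop k := by
    rw [← List.mem_toFinset, toFinset_drop_eq hT.1]
    exact Finset.mem_sdiff.mpr ⟨hT.2.1 ρ hρl.1 he, link_avoids hT hτ hρ e he⟩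
  have hidx' : v.idxOf f < v.idxOf e := drop_indexOf_lt hT.1 hfd hed hidx
  have h1 : insert f (ρ.erase e) ∈ T := hsh ρ hρl.1 e he f hfv hfρ hidx'
  have hfρτ : f ∉ ρ ∪ τ := by
    rw [Finset.mem_union]; rintro (h | h); exacts [hfρ h, hfτ h]
  have h2 : insert f ((ρ ∪ τ).erase e) ∈ T := hsh (ρ ∪ τ) hρl.2.2 e heρτ f hfv hfρτ hidx'
  have herase : (ρ ∪ τ).erase e = ρ.erase e ∪ τ := by
    ext y
    simp only [Finset.mem_erase, Finset.mem_union]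
    constructor
    · rintro ⟨hy, h | h⟩
      · exact Or.inl ⟨hy, h⟩
      · exact Or.inr h
    · rintro (⟨hy, h⟩ | h)
      · exact ⟨hy, Or.inl h⟩
      · exact ⟨fun hye => heτ (hye ▸ h), Or.inr h⟩
  rw [mem_linkC]
  refine ⟨h1, ?_, ?_⟩
  · rw [Finset.disjoint_left]
    intro y hy hyτ
    rcases Finset.mem_insert.mp hy with rfl | hy'
    · exact hfτ hyτ
    · exact Finset.disjoint_left.mp hρl.2.1 (Finset.mem_of_mem_erase hy') hyτ
  · have : insert f (ρ.erase e) ∪ τ = insert f ((ρ ∪ τ).erase e) := by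
      rw [herase, Finset.insert_union]
    rw [this]
    exact h2

lemma link_facet_union (hT : IsOrderedComplex v T)
    (hτ : IsFacet (restrictC T (v.take k).toFinset) τ) {ρ : Finset α}
    (hρ : IsFacet (linkC T τ) ρ) : IsFacet T (ρ ∪ τ) := by
  have hρl := mem_linkC.mp hρ.1
  refine ⟨hρl.2.2, ?_⟩
  intro γ hγ hsub
  by_contra hne
  obtain ⟨x, hxγ, hx⟩ := Finset.exists_of_ssubset (lt_of_le_of_ne hsub hne)
  have hxv : x ∈ v.toFinset := hT.2.1 γ hγ hxγ
  have hxρ : x ∉ ρ := fun h => hx (Finset.mem_union_left _ h)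
  have hxτ : x ∉ τ := fun h => hx (Finset.mem_union_right _ h)
  by_cases hxA : x ∈ (v.take k).toFinset
  · -- contradicts τ being a facet of the restriction
    have : insert x τ ∈ restrictC T (v.take k).toFinset := by
      rw [mem_restrictC]
      refine ⟨hT.2.2 γ hγ _ (Finset.insert_subset hxγ (Finset.subset_union_right.trans hsub)), ?_⟩
      exact Finset.insert_subset hxA (mem_restrictC.mp hτ.1).2
    have heq := hτ.2 _ this (Finset.subset_insert x τ)
    exact hxτ (heq ▸ Finset.mem_insert_self x τ)
  · -- then insert x ρ is in the link, contradicting ρ facet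
    have hmem : insert x ρ ∈ linkC T τ := by
      rw [mem_linkC]
      refine ⟨hT.2.2 γ hγ _ (Finset.insert_subset hxγ
        (Finset.subset_union_left.trans hsub)), ?_, ?_⟩
      · rw [Finset.disjoint_left]
        intro y hy hyτ
        rcases Finset.mem_insert.mp hy with rfl | hy'
        · exact hxτ hyτ
        · exact Finset.disjoint_left.mp hρl.2.1 hy' hyτ
      · refine hT.2.2 γ hγ _ ?_
        rw [Finset.insert_union]
        exact Finset.insert_subset hxγ hsub
    have heq := hρ.2 _ hmem (Finset.subset_insert x ρ)
    exact hxρ (heq ▸ Finset.mem_insert_self x ρ)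

lemma link_pure (hT : IsOrderedComplex v T) (hp : IsPure T)
    (hτ : IsFacet (restrictC T (v.take k).toFinset) τ) :
    IsPure (linkC T τ) := by
  intro ρ₁ ρ₂ h₁ h₂
  have f₁ := link_facet_union hT hτ h₁
  have f₂ := link_facet_union hT hτ h₂
  have hc := hp _ _ f₁ f₂
  have d₁ : Disjoint ρ₁ τ := (mem_linkC.mp h₁.1).2.1
  have d₂ : Disjoint ρ₂ τ := (mem_linkC.mp h₂.1).2.1
  rw [Finset.card_union_of_disjoint d₁, Finset.card_union_of_disjoint d₂] at hc
  omega

end Link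

lemma joinC_assoc (S₁ S₂ S₃ : Finset (Finset α)) :
    joinC (joinC S₁ S₂) S₃ = joinC S₁ (joinC S₂ S₃) := by
  ext σ
  simp only [mem_joinC]
  constructor
  · rintro ⟨_, ⟨a, ha, b, hb, rfl⟩, c, hc, rfl⟩
    exact ⟨a, ha, b ∪ c, ⟨b, hb, c, hc, rfl⟩, Finset.union_assoc a b c⟩
  · rintro ⟨a, ha, _, ⟨b, hb, c, hc, rfl⟩, rfl⟩
    exact ⟨a ∪ b, ⟨a, ha, b, hb, rfl⟩, c, hc, (Finset.union_assoc a b c).symm⟩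

lemma joinC_empty_left (S : Finset (Finset α)) : joinC {∅} S = S := by
  ext σ
  simp only [mem_joinC, Finset.mem_singleton]
  constructor
  · rintro ⟨a, rfl, b, hb, rfl⟩; rwa [Finset.empty_union]
  · intro h; exact ⟨∅, rfl, σ, h, (Finset.empty_union σ).symm⟩

lemma foldr_joinC_eq (M : List (Finset (Finset α))) (X : Finset (Finset α)) :
    M.foldr joinC X = joinC (M.foldr joinC {∅}) X := by
  induction M with
  | nil => simp [joinC_empty_left]
  | cons S M ih => simp only [List.foldr_cons, ih, joinC_assoc]

lemma joins_append (L₁ L₂ : List (List α × Finset (Finset α))) :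
    joins (L₁ ++ L₂) = joinC (joins L₁) (joins L₂) := by
  unfold joins
  rw [List.map_append, List.foldr_append]
  induction L₁ with
  | nil => simp [joinC_empty_left]
  | cons q L ih => simp only [List.map_cons, List.foldr_cons, ih, joinC_assoc]

lemma filter_filter_sub {w w₁ : List α} {I : Finset α} (hI : I ⊆ w₁.toFinset)
    (h : w.filter (fun a => decide (a ∈ w₁.toFinset)) = w₁) :
    w.filter (fun a => decide (a ∈ I)) = w₁.filter (fun a => decide (a ∈ I)) := by
  conv_rhs => rw [← h]
  rw [List.filter_filter]
  refine List.filter_congr ?_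
  intro a _
  by_cases haI : a ∈ I
  · simp [haI, hI haI]
  · simp [haI]

lemma witness_goodL {L : List (List α × Finset (Finset α))}
    (hpw : L.Pairwise fun q r => Disjoint q.1.toFinset r.1.toFinset)
    (hfac : ∀ q ∈ L, IsOrderedComplex q.1 q.2 ∧ IsPure q.2 ∧ IsShifted q.1 q.2) :
    GoodL L :=
  ⟨hpw, fun q hq σ hσ => (hfac q hq).1.2.1 σ hσ⟩

lemma part1 {w : List α} {S : Finset (Finset α)} (h : IsShuffledJoinOfShifted w S) :
    IsOrderedComplex w S ∧ IsPure S := by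
  obtain ⟨L, hnd, hpw, hgr, hfil, hS, hfac⟩ := h
  have hL : GoodL L := witness_goodL hpw hfac
  have hgr' : w.toFinset = grounds L := hgr
  have hS' : S = joins L := hS
  subst hS'
  refine ⟨⟨hnd, ?_, isComplex_joins hL fun q hq => (hfac q hq).1.2.2⟩,
    isPure_joins hL fun q hq => (hfac q hq).2.1⟩
  intro σ hσ
  rw [hgr']
  exact ((mem_joins hL).mp hσ).1

lemma part2 {w₁ w₂ w : List α} {S₁ S₂ : Finset (Finset α)}
    (h₁ : IsShuffledJoinOfShifted w₁ S₁) (h₂ : IsShuffledJoinOfShifted w₂ S₂)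
    (hdis : Disjoint w₁.toFinset w₂.toFinset) (hsh : IsShuffle w₁ w₂ w) :
    IsShuffledJoinOfShifted w (joinC S₁ S₂) := by
  obtain ⟨L₁, hnd₁, hpw₁, hgr₁, hfil₁, hS₁, hfac₁⟩ := h₁
  obtain ⟨L₂, hnd₂, hpw₂, hgr₂, hfil₂, hS₂, hfac₂⟩ := h₂
  obtain ⟨hndw, hgrw, hf₁, hf₂⟩ := hsh
  refine ⟨L₁ ++ L₂, hndw, ?_, ?_, ?_, ?_, ?_⟩
  · rw [List.pairwise_append]
    refine ⟨hpw₁, hpw₂, ?_⟩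
    intro q hq r hr
    have h1 : q.1.toFinset ⊆ w₁.toFinset := by
      rw [hgr₁]; exact mem_grounds_of_mem hq
    have h2 : r.1.toFinset ⊆ w₂.toFinset := by
      rw [hgr₂]; exact mem_grounds_of_mem hr
    exact Finset.disjoint_of_subset_left h1 (Finset.disjoint_of_subset_right h2 hdis)
  · rw [hgrw, hgr₁, hgr₂]
    ext a
    simp only [Finset.mem_union]
    rw [show ((L₁ ++ L₂).map fun q => q.1.toFinset).foldr (· ∪ ·) ∅ = grounds (L₁ ++ L₂) from rfl]
    rw [show (L₁.map fun q => q.1.toFinset).foldr (· ∪ ·) ∅ = grounds L₁ from rfl]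
    rw [show (L₂.map fun q => q.1.toFinset).foldr (· ∪ ·) ∅ = grounds L₂ from rfl]
    simp only [mem_grounds, List.mem_append]
    constructor
    · rintro (⟨q, hq, h⟩ | ⟨q, hq, h⟩)
      exacts [⟨q, Or.inl hq, h⟩, ⟨q, Or.inr hq, h⟩]
    · rintro ⟨q, hq | hq, h⟩
      exacts [Or.inl ⟨q, hq, h⟩, Or.inr ⟨q, hq, h⟩]
  · intro q hq
    rcases List.mem_append.mp hq with hq | hq
    · rw [filter_filter_sub (by rw [hgr₁]; exact mem_grounds_of_mem hq) hf₁]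
      exact hfil₁ q hq
    · rw [filter_filter_sub (by rw [hgr₂]; exact mem_grounds_of_mem hq) hf₂]
      exact hfil₂ q hq
  · rw [show ((L₁ ++ L₂).map fun q => q.2).foldr joinC {∅} = joins (L₁ ++ L₂) from rfl,
      joins_append, hS₁, hS₂]
    rfl
  · intro q hq
    rcases List.mem_append.mp hq with hq | hq
    exacts [hfac₁ q hq, hfac₂ q hq]

lemma filter_take_add_filter_drop (w : List α) (p : α → Bool) (k : ℕ) :
    (w.take k).filter p ++ (w.drop k).filter p = w.filter p := by
  rw [← List.filter_append, List.take_append_drop]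

lemma take_filter_eq (w : List α) (p : α → Bool) (k : ℕ) :
    (w.filter p).take ((w.take k).filter p).length = (w.take k).filter p := by
  rw [← filter_take_add_filter_drop w p k, List.take_left]

lemma drop_filter_eq (w : List α) (p : α → Bool) (k : ℕ) :
    (w.filter p).drop ((w.take k).filter p).length = (w.drop k).filter p := by
  rw [← filter_take_add_filter_drop w p k, List.drop_left]

lemma toFinset_filter_mem (l : List α) (I : Finset α) :
    (l.filter (fun a => decide (a ∈ I))).toFinset = l.toFinset ∩ I := by
  rw [List.toFinset_filter]
  ext a
  simp

lemma restrictC_inter {T : Finset (Finset α)} {I A : Finset α}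
    (hg : ∀ σ ∈ T, σ ⊆ I) : restrictC T A = restrictC T (A ∩ I) := by
  ext σ
  simp only [mem_restrictC]
  constructor
  · rintro ⟨h1, h2⟩
    exact ⟨h1, Finset.subset_inter h2 (hg σ h1)⟩
  · rintro ⟨h1, h2⟩
    exact ⟨h1, h2.trans Finset.inter_subset_left⟩

lemma part3 {w : List α} {S : Finset (Finset α)} (h : IsShuffledJoinOfShifted w S) (k : ℕ) :
    IsShuffledJoinOfShifted (w.take k) (restrictC S (w.take k).toFinset) := by
  obtain ⟨L, hnd, hpw, hgr, hfil, hS, hfac⟩ := h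
  have hL : GoodL L := witness_goodL hpw hfac
  have hgr' : w.toFinset = grounds L := hgr
  have hS' : S = joins L := hS
  set A := (w.take k).toFinset with hA
  have hAw : A ⊆ w.toFinset := fun a ha =>
    List.mem_toFinset.mpr ((List.take_sublist k w).mem (List.mem_toFinset.mp ha))
  -- ground set computation for new factors
  have hgq : ∀ q ∈ L, ((w.take k).filter (fun a => decide (a ∈ q.1.toFinset))).toFinset
      = A ∩ q.1.toFinset := fun q hq => toFinset_filter_mem _ _
  -- new factor lists are initial segments of the old ones
  have hvq : ∀ q ∈ L, (w.take k).filter (fun a => decide (a ∈ q.1.toFinset)) =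
      q.1.take (((w.take k).filter (fun a => decide (a ∈ q.1.toFinset))).length) := by
    intro q hq
    have h2 := take_filter_eq w (fun a => decide (a ∈ q.1.toFinset)) k
    rw [hfil q hq] at h2
    exact h2.symm
  refine ⟨L.map fun q => ((w.take k).filter (fun a => decide (a ∈ q.1.toFinset)),
    restrictC q.2 A), hnd.sublist (List.take_sublist k w), ?_, ?_, ?_, ?_, ?_⟩
  · rw [List.pairwise_map]
    refine hpw.imp_of_mem ?_
    intro q r hq hr hd
    dsimp only
    rw [hgq q hq, hgq r hr]
    exact Finset.disjoint_of_subset_left Finset.inter_subset_right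
      (Finset.disjoint_of_subset_right Finset.inter_subset_right hd)
  · ext a
    rw [show ((List.map (fun q => ((w.take k).filter fun a => decide (a ∈ q.1.toFinset),
        restrictC q.2 A)) L).map fun q => q.1.toFinset).foldr (· ∪ ·) ∅ =
        grounds (L.map fun q => ((w.take k).filter fun a => decide (a ∈ q.1.toFinset),
        restrictC q.2 A)) from rfl]
    simp only [mem_grounds, List.mem_map]
    constructor
    · intro ha
      have haw : a ∈ w.toFinset := hAw ha
      rw [hgr'] at haw
      obtain ⟨q, hq, haq⟩ := mem_grounds.mp haw
      refine ⟨_, ⟨q, hq, rfl⟩, ?_⟩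
      rw [hgq q hq]
      exact Finset.mem_inter.mpr ⟨ha, haq⟩
    · rintro ⟨_, ⟨q, hq, rfl⟩, haq⟩
      rw [hgq q hq] at haq
      exact (Finset.mem_inter.mp haq).1
  · rintro q' hq'
    obtain ⟨q, hq, rfl⟩ := List.mem_map.mp hq'
    dsimp only
    rw [hgq q hq]
    refine List.filter_congr ?_
    intro a ha
    have haA : a ∈ A := List.mem_toFinset.mpr ha
    by_cases haq : a ∈ q.1.toFinset
    · simp [haq, haA]
    · simp [haq]
  · -- restrictC S A = joins of restricted factors
    show restrictC S A = joins (L.map fun q =>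
      ((w.take k).filter (fun a => decide (a ∈ q.1.toFinset)), restrictC q.2 A))
    have hLg : GoodL (L.map fun q => ((w.take k).filter (fun a => decide (a ∈ q.1.toFinset)),
        restrictC q.2 A)) := by
      constructor
      · rw [List.pairwise_map]
        refine hpw.imp_of_mem ?_
        intro q r hq hr hd
        dsimp only
        rw [hgq q hq, hgq r hr]
        exact Finset.disjoint_of_subset_left Finset.inter_subset_right
          (Finset.disjoint_of_subset_right Finset.inter_subset_right hd)
      · rintro q' hq' σ hσ
        obtain ⟨q, hq, rfl⟩ := List.mem_map.mp hq'
        dsimp only at hσ ⊢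
        rw [hgq q hq]
        rw [mem_restrictC] at hσ
        exact Finset.subset_inter hσ.2 (hL.2 q hq σ hσ.1)
    ext σ
    rw [mem_restrictC, mem_joins hLg, hS', mem_joins hL]
    constructor
    · rintro ⟨⟨hσg, hσc⟩, hσA⟩
      constructor
      · intro a ha
        obtain ⟨q, hq, haq⟩ := mem_grounds.mp (hσg ha)
        refine mem_grounds.mpr ⟨_, List.mem_map.mpr ⟨q, hq, rfl⟩, ?_⟩
        rw [hgq q hq]
        exact Finset.mem_inter.mpr ⟨hσA ha, haq⟩
      · rintro q' hq'
        obtain ⟨q, hq, rfl⟩ := List.mem_map.mp hq'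
        dsimp only
        rw [hgq q hq, mem_restrictC]
        have : σ ∩ (A ∩ q.1.toFinset) = σ ∩ q.1.toFinset := by
          ext a
          simp only [Finset.mem_inter]
          exact ⟨fun ⟨h1, _, h3⟩ => ⟨h1, h3⟩, fun ⟨h1, h3⟩ => ⟨h1, hσA h1, h3⟩⟩
        rw [this]
        exact ⟨hσc q hq, Finset.inter_subset_left.trans hσA⟩
    · rintro ⟨hσg, hσc⟩
      have hσA : σ ⊆ A := by
        intro a ha
        obtain ⟨q', hq', haq⟩ := mem_grounds.mp (hσg ha)
        obtain ⟨q, hq, rfl⟩ := List.mem_map.mp hq'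
        rw [hgq q hq] at haq
        exact (Finset.mem_inter.mp haq).1
      refine ⟨⟨?_, ?_⟩, hσA⟩
      · intro a ha
        obtain ⟨q', hq', haq⟩ := mem_grounds.mp (hσg ha)
        obtain ⟨q, hq, rfl⟩ := List.mem_map.mp hq'
        rw [hgq q hq] at haq
        exact mem_grounds.mpr ⟨q, hq, (Finset.mem_inter.mp haq).2⟩
      · intro q hq
        have := hσc _ (List.mem_map.mpr ⟨q, hq, rfl⟩)
        dsimp only at this
        rw [hgq q hq, mem_restrictC] at this
        have heq : σ ∩ (A ∩ q.1.toFinset) = σ ∩ q.1.toFinset := by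
          ext a
          simp only [Finset.mem_inter]
          exact ⟨fun ⟨h1, _, h3⟩ => ⟨h1, h3⟩, fun ⟨h1, h3⟩ => ⟨h1, hσA h1, h3⟩⟩
        rw [heq] at this
        exact this.1
  · rintro q' hq'
    obtain ⟨q, hq, rfl⟩ := List.mem_map.mp hq'
    obtain ⟨hoq, hpq, hshq⟩ := hfac q hq
    dsimp only
    set kq := ((w.take k).filter (fun a => decide (a ∈ q.1.toFinset))).length with hkq
    have hv : (w.take k).filter (fun a => decide (a ∈ q.1.toFinset)) = q.1.take kq := hvq q hq
    have hrq : restrictC q.2 A = restrictC q.2 ((q.1.take kq).toFinset) := by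
      rw [← hv, hgq q hq]
      exact restrictC_inter (fun σ hσ => hoq.2.1 σ hσ)
    rw [hv, hrq]
    exact ⟨restrict_ordered hoq, restrict_pure hoq hpq hshq, restrict_shifted hoq hshq⟩

lemma greedy_factor {S : Finset (Finset α)} {L : List (List α × Finset (Finset α))}
    (hL : GoodL L) (hS : S = joins L) (hemp : ∅ ∈ S) (A : Finset α)
    (u : List α) (hu : ∀ a ∈ u, a ∈ grounds L) :
    u.foldl (gstep (restrictC S A)) ∅ ∈ restrictC S A ∧
    ∀ q ∈ L, (u.foldl (gstep (restrictC S A)) ∅) ∩ q.1.toFinset =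
      (u.filter fun a => decide (a ∈ q.1.toFinset)).foldl (gstep (restrictC q.2 A)) ∅ := by
  induction u using List.reverseRecOn with
  | nil =>
    refine ⟨mem_restrictC.mpr ⟨hemp, Finset.empty_subset A⟩, ?_⟩
    intro q hq
    simp
  | append_singleton u a ih =>
    have hu' : ∀ b ∈ u, b ∈ grounds L := fun b hb => hu b (List.mem_append_left _ hb)
    have ha : a ∈ grounds L := hu a (List.mem_append_right _ (List.mem_singleton_self a))
    obtain ⟨ihm, ihc⟩ := ih hu'
    set R := restrictC S A with hR
    set τ := u.foldl (gstep R) ∅ with hτ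
    have hτA : τ ⊆ A := (mem_restrictC.mp ihm).2
    have hτS : τ ∈ S := (mem_restrictC.mp ihm).1
    have hτchar := (mem_joins hL).mp (hS ▸ hτS)
    have hfold : (u ++ [a]).foldl (gstep R) ∅ = gstep R τ a := by
      rw [List.foldl_append]; rfl
    constructor
    · rw [hfold]
      unfold gstep
      split
      · exact mem_restrictC.mpr ⟨(mem_restrictC.mp (by assumption)).1,
          (mem_restrictC.mp (by assumption)).2⟩
      · exact ihm
    · intro q hq
      by_cases haq : a ∈ q.1.toFinset
      · have hfl : (u ++ [a]).filter (fun x => decide (x ∈ q.1.toFinset)) =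
            u.filter (fun x => decide (x ∈ q.1.toFinset)) ++ [a] := by
          rw [List.filter_append]
          simp [haq, List.mem_toFinset.mp haq]
        rw [hfold, hfl, List.foldl_append]
        have hstep : ([a].foldl (gstep (restrictC q.2 A))
            ((u.filter fun x => decide (x ∈ q.1.toFinset)).foldl (gstep (restrictC q.2 A)) ∅)) =
            gstep (restrictC q.2 A) ((u.filter fun x => decide (x ∈ q.1.toFinset)).foldl
              (gstep (restrictC q.2 A)) ∅) a := rfl
        rw [hstep, ← ihc q hq]
        -- key equivalence
        have hkey : insert a τ ∈ R ↔ insert a (τ ∩ q.1.toFinset) ∈ restrictC q.2 A := by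
          constructor
          · intro hmem
            rw [mem_restrictC] at hmem ⊢
            have h1 : (insert a τ) ∩ q.1.toFinset = insert a (τ ∩ q.1.toFinset) :=
              Finset.insert_inter_of_mem haq
            have h2 := ((mem_joins hL).mp (hS ▸ hmem.1)).2 q hq
            rw [h1] at h2
            exact ⟨h2, Finset.insert_subset (hmem.2 (Finset.mem_insert_self a τ))
              (Finset.inter_subset_left.trans hτA)⟩
          · intro hmem
            rw [mem_restrictC] at hmem ⊢
            have haA : a ∈ A := hmem.2 (Finset.mem_insert_self a _)
            refine ⟨?_, Finset.insert_subset haA hτA⟩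
            rw [hS, mem_joins hL]
            constructor
            · exact Finset.insert_subset ha hτchar.1
            · intro r hr
              by_cases har : a ∈ r.1.toFinset
              · by_cases hqr : q = r
                · subst hqr
                  rw [Finset.insert_inter_of_mem har]
                  exact hmem.1
                · exact absurd (Finset.disjoint_left.mp
                    (pairwise_forall_ne hL.1 q hq r hr hqr) haq har) not_false
              · rw [Finset.insert_inter_of_notMem har]
                exact hτchar.2 r hr
        unfold gstep
        by_cases hin : insert a τ ∈ R
        · rw [if_pos hin, if_pos (hkey.mp hin)]
          exact Finset.insert_inter_of_mem haq
        · rw [if_neg hin, if_neg (fun hc => hin (hkey.mpr hc))]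
      · have hfl : (u ++ [a]).filter (fun x => decide (x ∈ q.1.toFinset)) =
            u.filter (fun x => decide (x ∈ q.1.toFinset)) := by
          rw [List.filter_append]
          simp only [List.filter_cons, List.filter_nil]
          rw [if_neg (by simpa using haq)]
          exact List.append_nil _
        rw [hfold, hfl, ← ihc q hq]
        unfold gstep
        split
        · exact Finset.insert_inter_of_notMem haq
        · rfl

lemma joinC_empty_left' (X : Finset (Finset α)) : joinC ∅ X = ∅ := by
  simp [joinC]

lemma part4 {w : List α} {S : Finset (Finset α)} (h : IsShuffledJoinOfShifted w S) (k : ℕ) :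
    IsShuffledJoinOfShifted (w.drop k) (contractC w S (w.take k).toFinset) := by
  obtain ⟨L, hnd, hpw, hgr, hfil, hS, hfac⟩ := h
  have hL : GoodL L := witness_goodL hpw hfac
  have hgr' : w.toFinset = grounds L := hgr
  have hS' : S = joins L := hS
  set A := (w.take k).toFinset with hA
  by_cases hemp : ∅ ∈ S
  swap
  · -- S is the void complex; the contraction is void as well
    have hSe : S = ∅ := by
      rw [Finset.eq_empty_iff_forall_notMem]
      intro σ hσ
      refine hemp ?_
      rw [hS']
      exact isComplex_joins hL (fun q hq => (hfac q hq).1.2.2) σ (hS' ▸ hσ) ∅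
        (Finset.empty_subset σ)
    have hco : contractC w S A = ∅ := by
      rw [hSe]
      rfl
    rw [hco]
    refine ⟨[(w.drop k, ∅)], hnd.sublist (List.drop_sublist k w), ?_, ?_, ?_, ?_, ?_⟩
    · simp
    · simp [grounds]
    · intro q hq
      rw [List.mem_singleton] at hq
      subst hq
      refine List.filter_eq_self.mpr ?_
      intro a ha
      simp [ha]
    · show (∅ : Finset (Finset α)) = joins [(w.drop k, ∅)]
      show (∅ : Finset (Finset α)) = joinC ∅ (joins [])
      rw [joinC_empty_left']
    · intro q hq
      rw [List.mem_singleton] at hq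
      subst hq
      refine ⟨⟨hnd.sublist (List.drop_sublist k w), ?_, ?_⟩, ?_, ?_⟩
      · intro σ hσ; exact absurd hσ (Finset.notMem_empty σ)
      · intro σ hσ; exact absurd hσ (Finset.notMem_empty σ)
      · intro σ τ hσ _; exact absurd hσ.1 (Finset.notMem_empty σ)
      · intro σ hσ; exact absurd hσ (Finset.notMem_empty σ)
  · -- main case
    have hwg : ∀ a ∈ w, a ∈ grounds L := by
      intro a ha
      rw [← hgr']
      exact List.mem_toFinset.mpr ha
    obtain ⟨hτR, hτcomp⟩ := greedy_factor hL hS' hemp A w hwg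
    have hτdef : lexMinFacet w (restrictC S A) = w.foldl (gstep (restrictC S A)) ∅ := rfl
    set τ := lexMinFacet w (restrictC S A) with hτ
    rw [← hτdef] at hτR hτcomp
    have hτcomp' : ∀ q ∈ L, τ ∩ q.1.toFinset = lexMinFacet q.1 (restrictC q.2 A) := by
      intro q hq
      rw [hτcomp q hq, hfil q hq]
      rfl
    have hτA : τ ⊆ A := (mem_restrictC.mp hτR).2
    have hτS : τ ∈ S := (mem_restrictC.mp hτR).1
    have hτchar := (mem_joins hL).mp (hS' ▸ hτS)
    have hempq : ∀ q ∈ L, ∅ ∈ q.2 := by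
      intro q hq
      have := ((mem_joins hL).mp (hS' ▸ hemp)).2 q hq
      rwa [Finset.empty_inter] at this
    have hgq : ∀ q ∈ L, ((w.drop k).filter (fun a => decide (a ∈ q.1.toFinset))).toFinset
        = (w.drop k).toFinset ∩ q.1.toFinset := fun q hq => toFinset_filter_mem _ _
    have hdropw : (w.drop k).toFinset = w.toFinset \ A := toFinset_drop_eq hnd
    -- per-factor facts
    have hvqt : ∀ q ∈ L, (w.take k).filter (fun a => decide (a ∈ q.1.toFinset)) =
        q.1.take (((w.take k).filter (fun a => decide (a ∈ q.1.toFinset))).length) := by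
      intro q hq
      have h2 := take_filter_eq w (fun a => decide (a ∈ q.1.toFinset)) k
      rw [hfil q hq] at h2
      exact h2.symm
    have hvqd : ∀ q ∈ L, (w.drop k).filter (fun a => decide (a ∈ q.1.toFinset)) =
        q.1.drop (((w.take k).filter (fun a => decide (a ∈ q.1.toFinset))).length) := by
      intro q hq
      have h2 := drop_filter_eq w (fun a => decide (a ∈ q.1.toFinset)) k
      rw [hfil q hq] at h2
      exact h2.symm
    have hAq : ∀ q ∈ L, restrictC q.2 A = restrictC q.2
        ((q.1.take (((w.take k).filter (fun a => decide (a ∈ q.1.toFinset))).length)).toFinset) := by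
      intro q hq
      rw [← hvqt q hq, toFinset_filter_mem]
      exact restrictC_inter (fun σ hσ => (hfac q hq).1.2.1 σ hσ)
    have hτqf : ∀ q ∈ L, IsFacet (restrictC q.2
        ((q.1.take (((w.take k).filter (fun a => decide (a ∈ q.1.toFinset))).length)).toFinset))
        (lexMinFacet q.1 (restrictC q.2 A)) := by
      intro q hq
      rw [← hAq q hq]
      refine lexMinFacet_isFacet _ (isComplex_restrictC (hfac q hq).1.2.2 A)
        (mem_restrictC.mpr ⟨hempq q hq, Finset.empty_subset A⟩) ?_
      intro σ hσ
      exact (hfac q hq).1.2.1 σ (mem_restrictC.mp hσ).1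
    -- faces of each link avoid A
    have hlinksub : ∀ q ∈ L, ∀ ρ ∈ linkC q.2 (lexMinFacet q.1 (restrictC q.2 A)),
        ρ ⊆ (w.drop k).toFinset ∩ q.1.toFinset := by
      intro q hq ρ hρ
      intro a ha
      have haq : a ∈ q.1.toFinset := (hfac q hq).1.2.1 ρ (mem_linkC.mp hρ).1 ha
      have havoid := link_avoids (hfac q hq).1 (hτqf q hq) hρ a ha
      rw [← hvqt q hq, toFinset_filter_mem] at havoid
      have haA : a ∉ A := fun hA2 => havoid (Finset.mem_inter.mpr ⟨hA2, haq⟩)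
      have haw : a ∈ w.toFinset := by rw [hgr']; exact mem_grounds_of_mem hq haq
      rw [Finset.mem_inter, hdropw]
      exact ⟨Finset.mem_sdiff.mpr ⟨haw, haA⟩, haq⟩
    -- the witness list
    refine ⟨L.map fun q => ((w.drop k).filter (fun a => decide (a ∈ q.1.toFinset)),
      linkC q.2 (lexMinFacet q.1 (restrictC q.2 A))),
      hnd.sublist (List.drop_sublist k w), ?_, ?_, ?_, ?_, ?_⟩
    · rw [List.pairwise_map]
      refine hpw.imp_of_mem ?_
      intro q r hq hr hd
      dsimp only
      rw [hgq q hq, hgq r hr]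
      exact Finset.disjoint_of_subset_left Finset.inter_subset_right
        (Finset.disjoint_of_subset_right Finset.inter_subset_right hd)
    · ext a
      rw [show ((List.map (fun q => ((w.drop k).filter fun a => decide (a ∈ q.1.toFinset),
          linkC q.2 (lexMinFacet q.1 (restrictC q.2 A)))) L).map fun q => q.1.toFinset).foldr
          (· ∪ ·) ∅ = grounds (L.map fun q => ((w.drop k).filter fun a =>
          decide (a ∈ q.1.toFinset), linkC q.2 (lexMinFacet q.1 (restrictC q.2 A)))) from rfl]
      simp only [mem_grounds, List.mem_map]
      constructor
      · intro ha
        have haw : a ∈ w.toFinset := by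
          rw [hdropw] at ha
          exact (Finset.mem_sdiff.mp ha).1
        rw [hgr'] at haw
        obtain ⟨q, hq, haq⟩ := mem_grounds.mp haw
        refine ⟨_, ⟨q, hq, rfl⟩, ?_⟩
        rw [hgq q hq]
        exact Finset.mem_inter.mpr ⟨ha, haq⟩
      · rintro ⟨_, ⟨q, hq, rfl⟩, haq⟩
        rw [hgq q hq] at haq
        exact (Finset.mem_inter.mp haq).1
    · rintro q' hq'
      obtain ⟨q, hq, rfl⟩ := List.mem_map.mp hq'
      dsimp only
      rw [hgq q hq]
      refine List.filter_congr ?_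
      intro a ha
      have haD : a ∈ (w.drop k).toFinset := List.mem_toFinset.mpr ha
      by_cases haq : a ∈ q.1.toFinset
      · simp [haq, haD]
      · simp [haq]
    · -- the contraction is the join of the links
      show contractC w S A = joins (L.map fun q =>
        ((w.drop k).filter (fun a => decide (a ∈ q.1.toFinset)),
          linkC q.2 (lexMinFacet q.1 (restrictC q.2 A))))
      have hLg : GoodL (L.map fun q => ((w.drop k).filter (fun a => decide (a ∈ q.1.toFinset)),
          linkC q.2 (lexMinFacet q.1 (restrictC q.2 A)))) := by
        constructor
        · rw [List.pairwise_map]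
          refine hpw.imp_of_mem ?_
          intro q r hq hr hd
          dsimp only
          rw [hgq q hq, hgq r hr]
          exact Finset.disjoint_of_subset_left Finset.inter_subset_right
            (Finset.disjoint_of_subset_right Finset.inter_subset_right hd)
        · rintro q' hq' ρ hρ
          obtain ⟨q, hq, rfl⟩ := List.mem_map.mp hq'
          dsimp only at hρ ⊢
          rw [hgq q hq]
          exact hlinksub q hq ρ hρ
      have hcon : contractC w S A = linkC S τ := rfl
      rw [hcon]
      ext ρ
      rw [mem_linkC, mem_joins hLg]
      constructor
      · rintro ⟨hρS, hdis, hρτS⟩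
        have hρchar := (mem_joins hL).mp (hS' ▸ hρS)
        have hρτchar := (mem_joins hL).mp (hS' ▸ hρτS)
        have hcompo : ∀ q ∈ L, ρ ∩ q.1.toFinset ∈ linkC q.2 (lexMinFacet q.1 (restrictC q.2 A)) := by
          intro q hq
          rw [mem_linkC]
          refine ⟨hρchar.2 q hq, ?_, ?_⟩
          · rw [← hτcomp' q hq]
            exact Finset.disjoint_of_subset_left Finset.inter_subset_left
              (Finset.disjoint_of_subset_right Finset.inter_subset_left hdis)
          · rw [← hτcomp' q hq]
            have : ρ ∩ q.1.toFinset ∪ τ ∩ q.1.toFinset = (ρ ∪ τ) ∩ q.1.toFinset := by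
              rw [Finset.union_inter_distrib_right]
            rw [this]
            exact hρτchar.2 q hq
        have hρdrop : ρ ⊆ (w.drop k).toFinset := by
          intro a ha
          obtain ⟨q, hq, haq⟩ := mem_grounds.mp (hρchar.1 ha)
          exact Finset.mem_inter.mp (hlinksub q hq _ (hcompo q hq)
            (Finset.mem_inter.mpr ⟨ha, haq⟩)) |>.1
        constructor
        · intro a ha
          obtain ⟨q, hq, haq⟩ := mem_grounds.mp (hρchar.1 ha)
          refine mem_grounds.mpr ⟨_, List.mem_map.mpr ⟨q, hq, rfl⟩, ?_⟩
          rw [hgq q hq]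
          exact Finset.mem_inter.mpr ⟨hρdrop ha, haq⟩
        · rintro q' hq'
          obtain ⟨q, hq, rfl⟩ := List.mem_map.mp hq'
          dsimp only
          rw [hgq q hq]
          have : ρ ∩ ((w.drop k).toFinset ∩ q.1.toFinset) = ρ ∩ q.1.toFinset := by
            ext a
            simp only [Finset.mem_inter]
            exact ⟨fun ⟨h1, _, h3⟩ => ⟨h1, h3⟩, fun ⟨h1, h3⟩ => ⟨h1, hρdrop h1, h3⟩⟩
          rw [this]
          exact hcompo q hq
      · rintro ⟨hρg, hρc⟩
        have hρdrop : ρ ⊆ (w.drop k).toFinset := by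
          intro a ha
          obtain ⟨q', hq', haq⟩ := mem_grounds.mp (hρg ha)
          obtain ⟨q, hq, rfl⟩ := List.mem_map.mp hq'
          rw [hgq q hq] at haq
          exact (Finset.mem_inter.mp haq).1
        have hρgL : ρ ⊆ grounds L := by
          intro a ha
          obtain ⟨q', hq', haq⟩ := mem_grounds.mp (hρg ha)
          obtain ⟨q, hq, rfl⟩ := List.mem_map.mp hq'
          rw [hgq q hq] at haq
          exact mem_grounds_of_mem hq (Finset.mem_inter.mp haq).2
        have hcompo : ∀ q ∈ L, ρ ∩ q.1.toFinset ∈ linkC q.2 (lexMinFacet q.1 (restrictC q.2 A)) := by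
          intro q hq
          have := hρc _ (List.mem_map.mpr ⟨q, hq, rfl⟩)
          dsimp only at this
          rw [hgq q hq] at this
          have heq : ρ ∩ ((w.drop k).toFinset ∩ q.1.toFinset) = ρ ∩ q.1.toFinset := by
            ext a
            simp only [Finset.mem_inter]
            exact ⟨fun ⟨h1, _, h3⟩ => ⟨h1, h3⟩, fun ⟨h1, h3⟩ => ⟨h1, hρdrop h1, h3⟩⟩
          rwa [heq] at this
        have hρS : ρ ∈ S := by
          rw [hS', mem_joins hL]
          exact ⟨hρgL, fun q hq => (mem_linkC.mp (hcompo q hq)).1⟩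
        refine ⟨hρS, ?_, ?_⟩
        · rw [Finset.disjoint_left]
          intro x hxρ hxτ
          obtain ⟨q, hq, hxq⟩ := mem_grounds.mp (hρgL hxρ)
          have hd := (mem_linkC.mp (hcompo q hq)).2.1
          have hxτq : x ∈ lexMinFacet q.1 (restrictC q.2 A) := by
            rw [← hτcomp' q hq]
            exact Finset.mem_inter.mpr ⟨hxτ, hxq⟩
          exact Finset.disjoint_left.mp hd (Finset.mem_inter.mpr ⟨hxρ, hxq⟩) hxτq
        · rw [hS', mem_joins hL]
          constructor
          · exact Finset.union_subset hρgL hτchar.1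
          · intro q hq
            have h3 := (mem_linkC.mp (hcompo q hq)).2.2
            rw [← hτcomp' q hq] at h3
            rw [Finset.union_inter_distrib_right]
            exact h3
    · -- per-factor properties of the links
      rintro q' hq'
      obtain ⟨q, hq, rfl⟩ := List.mem_map.mp hq'
      obtain ⟨hoq, hpq, hshq⟩ := hfac q hq
      dsimp only
      rw [hvqd q hq]
      exact ⟨link_ordered hoq (hτqf q hq), link_pure hoq hpq (hτqf q hq),
        link_shifted hoq hshq (hτqf q hq)⟩

/-- The class of shuffled joins of pure shifted ordered complexes is a Hopf class. -/
theorem isHopfClass_shuffledJoinsOfShifted :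
    IsHopfClass {p : List α × Finset (Finset α) | IsShuffledJoinOfShifted p.1 p.2} := by
  refine ⟨?_, ?_, ?_, ?_⟩
  · intro p hp
    exact part1 hp
  · intro p₁ h₁ p₂ h₂ hdis w hsh
    exact part2 h₁ h₂ hdis hsh
  · intro p hp k
    have h3 := part3 hp k
    exact ⟨(part1 h3).2, h3⟩
  · intro p hp k
    exact part4 hp k

end OrderedComplexes
end

section
/- Every ordered matroid complex is order-decomposable: if Σ is a matroid complex on a finite set I and w is any linear order on I, then (w,Σ) is order-decomposable. -/
namespace OrderedComplexes

variable {α : Type*} [DecidableEq α]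

/-- A matroid complex on `I`: a nonempty simplicial complex on `I` all of whose
restrictions are pure. -/
def IsMatroidComplex (I : Finset α) (S : Finset (Finset α)) : Prop :=
  S.Nonempty ∧ (∀ σ ∈ S, σ ⊆ I) ∧ (∀ σ ∈ S, ∀ τ ⊆ σ, τ ∈ S) ∧
    ∀ T ⊆ I, IsPure (restrictC S T)


/-! ### Auxiliary lemmas -/

private lemma foldl_subset (S : Finset (Finset α)) :
    ∀ (l : List α) (τ : Finset α),
      τ ⊆ l.foldl (fun τ a => if insert a τ ∈ S then insert a τ else τ) τ
  | [], τ => subset_rfl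
  | a :: l, τ => by
      simp only [List.foldl_cons]
      refine subset_trans ?_ (foldl_subset S l _)
      split
      · exact Finset.subset_insert a τ
      · exact subset_rfl

private lemma foldl_mem (S : Finset (Finset α)) :
    ∀ (l : List α) (τ : Finset α), τ ∈ S →
      l.foldl (fun τ a => if insert a τ ∈ S then insert a τ else τ) τ ∈ S
  | [], τ, h => h
  | a :: l, τ, h => by
      simp only [List.foldl_cons]
      apply foldl_mem S l
      split
      · assumption
      · exact h

private lemma foldl_max (S : Finset (Finset α)) (hc : IsComplex S) (σ : Finset α)
    (hσ : σ ∈ S) :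
    ∀ (l : List α) (τ : Finset α), σ ⊆ τ ∪ l.toFinset →
      l.foldl (fun τ a => if insert a τ ∈ S then insert a τ else τ) τ ⊆ σ →
      σ ⊆ l.foldl (fun τ a => if insert a τ ∈ S then insert a τ else τ) τ
  | [], τ, hsub, hres => by simpa using hsub
  | a :: l, τ, hsub, hres => by
      simp only [List.foldl_cons] at hres ⊢
      have hτσ : τ ⊆ σ := (foldl_subset S (a :: l) τ).trans (by simpa using hres)
      by_cases ha : a ∈ σ
      · have hins : insert a τ ∈ S := hc σ hσ _ (Finset.insert_subset ha hτσ)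
        have hstep : (if insert a τ ∈ S then insert a τ else τ) = insert a τ := if_pos hins
        rw [hstep] at hres ⊢
        apply foldl_max S hc σ hσ l (insert a τ) _ hres
        intro x hx
        rcases Finset.mem_union.mp (hsub hx) with h1 | h2
        · exact Finset.mem_union_left _ (Finset.mem_insert_of_mem h1)
        · simp only [List.toFinset_cons, Finset.mem_insert] at h2
          rcases h2 with rfl | h2
          · exact Finset.mem_union_left _ (Finset.mem_insert_self _ _)
          · exact Finset.mem_union_right _ h2
      · apply foldl_max S hc σ hσ l _ _ hres
        intro x hx
        rcases Finset.mem_union.mp (hsub hx) with h1 | h2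
        · exact Finset.mem_union_left _ (by split <;> simp [h1])
        · simp only [List.toFinset_cons, Finset.mem_insert] at h2
          rcases h2 with rfl | h2
          · exact absurd hx ha
          · exact Finset.mem_union_right _ h2

private lemma lexMinFacet_isFacet_s12 {w : List α} {S : Finset (Finset α)}
    (hc : IsComplex S) (hne : S.Nonempty) (hsub : ∀ σ ∈ S, σ ⊆ w.toFinset) :
    IsFacet S (lexMinFacet w S) := by
  have hempty : (∅ : Finset α) ∈ S := by
    obtain ⟨σ, hσ⟩ := hne
    exact hc σ hσ ∅ (Finset.empty_subset σ)
  refine ⟨foldl_mem S w ∅ hempty, ?_⟩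
  intro σ hσ hle
  refine subset_antisymm hle (foldl_max S hc σ hσ w ∅ ?_ hle)
  simpa using hsub σ hσ

/-- Extend any face to a facet. -/
private lemma exists_facet_superset (S : Finset (Finset α)) {σ : Finset α} (hσ : σ ∈ S) :
    ∃ ρ, IsFacet S ρ ∧ σ ⊆ ρ := by
  obtain ⟨ρ, hρmem, hρmax⟩ := Finset.exists_max_image (S.filter (σ ⊆ ·)) Finset.card
    ⟨σ, Finset.mem_filter.mpr ⟨hσ, subset_rfl⟩⟩
  simp only [Finset.mem_filter] at hρmem
  refine ⟨ρ, ⟨hρmem.1, ?_⟩, hρmem.2⟩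
  intro τ hτ hsub
  have : τ ∈ S.filter (σ ⊆ ·) := Finset.mem_filter.mpr ⟨hτ, hρmem.2.trans hsub⟩
  exact Finset.eq_of_subset_of_card_le hsub (hρmax τ this)

private lemma matroid_aug {I : Finset α} {S : Finset (Finset α)}
    (hS : IsMatroidComplex I S) {σ τ : Finset α} (hσ : σ ∈ S) (hτ : τ ∈ S)
    (h : σ.card < τ.card) : ∃ x ∈ τ, x ∉ σ ∧ insert x σ ∈ S := by
  obtain ⟨hne, hI, hdc, hpure⟩ := hS
  set T := σ ∪ τ with hT
  have hTI : T ⊆ I := Finset.union_subset (hI σ hσ) (hI τ hτ)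
  have hσT : σ ∈ restrictC S T := Finset.mem_filter.mpr ⟨hσ, Finset.subset_union_left⟩
  have hτT : τ ∈ restrictC S T := Finset.mem_filter.mpr ⟨hτ, Finset.subset_union_right⟩
  obtain ⟨σ', hσ', hσσ'⟩ := exists_facet_superset (restrictC S T) hσT
  obtain ⟨τ', hτ', hττ'⟩ := exists_facet_superset (restrictC S T) hτT
  have hcard : σ'.card = τ'.card := hpure T hTI σ' τ' hσ' hτ'
  have hlt : σ.card < σ'.card := by
    have := Finset.card_le_card hττ'
    omega
  obtain ⟨x, hxσ', hxσ⟩ := Finset.exists_of_ssubset (hσσ'.ssubset_of_ne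
    (fun he => by rw [he] at hlt; omega))
  have hσ'S : σ' ∈ S := (Finset.mem_filter.mp hσ'.1).1
  have hσ'T : σ' ⊆ T := (Finset.mem_filter.mp hσ'.1).2
  have hxτ : x ∈ τ := by
    rcases Finset.mem_union.mp (hσ'T hxσ') with h1 | h2
    · exact absurd h1 hxσ
    · exact h2
  exact ⟨x, hxτ, hxσ, hdc σ' hσ'S _ (Finset.insert_subset hxσ' hσσ')⟩

private lemma restrict_eq_self {I : Finset α} {S : Finset (Finset α)}
    (hI : ∀ σ ∈ S, σ ⊆ I) : restrictC S I = S := by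
  apply Finset.filter_true_of_mem
  exact hI

private lemma restrict_restrict (S : Finset (Finset α)) {T A : Finset α} (hTA : T ⊆ A) :
    restrictC (restrictC S A) T = restrictC S T := by
  ext σ
  simp only [restrictC, Finset.mem_filter]
  constructor
  · rintro ⟨⟨h1, _⟩, h3⟩; exact ⟨h1, h3⟩
  · rintro ⟨h1, h2⟩; exact ⟨⟨h1, h2.trans hTA⟩, h2⟩

private lemma restrict_matroid {I : Finset α} {S : Finset (Finset α)}
    (hS : IsMatroidComplex I S) {A : Finset α} (hA : A ⊆ I) :
    IsMatroidComplex A (restrictC S A) := by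
  obtain ⟨hne, hI, hdc, hpure⟩ := hS
  have hempty : (∅ : Finset α) ∈ S := by
    obtain ⟨σ, hσ⟩ := hne; exact hdc σ hσ ∅ (Finset.empty_subset σ)
  refine ⟨⟨∅, Finset.mem_filter.mpr ⟨hempty, Finset.empty_subset A⟩⟩, ?_, ?_, ?_⟩
  · intro σ hσ; exact (Finset.mem_filter.mp hσ).2
  · intro σ hσ τ hτσ
    obtain ⟨h1, h2⟩ := Finset.mem_filter.mp hσ
    exact Finset.mem_filter.mpr ⟨hdc σ h1 τ hτσ, hτσ.trans h2⟩
  · intro T hTA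
    rw [restrict_restrict S hTA]
    exact hpure T (hTA.trans hA)

private lemma link_matroid {I : Finset α} {S : Finset (Finset α)}
    (hS : IsMatroidComplex I S) {A : Finset α} (hA : A ⊆ I) {τ : Finset α}
    (hτ : IsFacet (restrictC S A) τ) :
    IsMatroidComplex (I \ A) (linkC S τ) := by
  have hdc := hS.2.2.1
  have hI := hS.2.1
  have hτS : τ ∈ S := (Finset.mem_filter.mp hτ.1).1
  have hτA : τ ⊆ A := (Finset.mem_filter.mp hτ.1).2
  have hmemlink : ∀ ρ, ρ ∈ linkC S τ ↔ ρ ∈ S ∧ Disjoint ρ τ ∧ ρ ∪ τ ∈ S := by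
    intro ρ; simp [linkC, Finset.mem_filter]
  refine ⟨⟨∅, (hmemlink ∅).mpr ⟨hdc τ hτS ∅ (Finset.empty_subset τ),
      Finset.disjoint_empty_left τ, by simpa using hτS⟩⟩, ?_, ?_, ?_⟩
  · -- faces are in I \ A
    intro ρ hρ
    obtain ⟨hρS, hρd, hρτ⟩ := (hmemlink ρ).mp hρ
    intro a ha
    rw [Finset.mem_sdiff]
    refine ⟨hI ρ hρS ha, fun haA => ?_⟩
    have h1 : insert a τ ∈ restrictC S A := Finset.mem_filter.mpr
      ⟨hdc _ hρτ _ (Finset.insert_subset (Finset.mem_union_left _ ha)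
        Finset.subset_union_right), Finset.insert_subset haA hτA⟩
    have h2 := hτ.2 _ h1 (Finset.subset_insert a τ)
    have : a ∈ τ := h2 ▸ Finset.mem_insert_self a τ
    exact Finset.disjoint_left.mp hρd ha this
  · -- downward closed
    intro ρ hρ ρ' hρ'
    obtain ⟨hρS, hρd, hρτ⟩ := (hmemlink ρ).mp hρ
    exact (hmemlink ρ').mpr ⟨hdc ρ hρS ρ' hρ', Finset.disjoint_of_subset_left hρ' hρd,
      hdc _ hρτ _ (Finset.union_subset_union_left hρ')⟩
  · -- all restrictions pure
    intro T _
    intro ρ₁ ρ₂ h₁ h₂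
    by_contra hne
    -- wlog ρ₁.card < ρ₂.card
    have key : ∀ ρ₁ ρ₂, IsFacet (restrictC (linkC S τ) T) ρ₁ →
        IsFacet (restrictC (linkC S τ) T) ρ₂ → ρ₁.card < ρ₂.card → False := by
      clear h₁ h₂ hne ρ₁ ρ₂
      intro ρ₁ ρ₂ h₁ h₂ hlt
      obtain ⟨h₁L, h₁T⟩ := Finset.mem_filter.mp h₁.1
      obtain ⟨h₂L, h₂T⟩ := Finset.mem_filter.mp h₂.1
      obtain ⟨h₁S, h₁d, h₁τ⟩ := (hmemlink ρ₁).mp h₁L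
      obtain ⟨h₂S, h₂d, h₂τ⟩ := (hmemlink ρ₂).mp h₂L
      have hcard : (ρ₁ ∪ τ).card < (ρ₂ ∪ τ).card := by
        rw [Finset.card_union_of_disjoint h₁d, Finset.card_union_of_disjoint h₂d]
        omega
      obtain ⟨x, hx, hxn, hxins⟩ := matroid_aug hS h₁τ h₂τ hcard
      have hxτ : x ∉ τ := fun h => hxn (Finset.mem_union_right _ h)
      have hxρ₂ : x ∈ ρ₂ := by
        rcases Finset.mem_union.mp hx with h | h
        · exact h
        · exact absurd h hxτ
      have hxρ₁ : x ∉ ρ₁ := fun h => hxn (Finset.mem_union_left _ h)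
      have hmem : insert x ρ₁ ∈ restrictC (linkC S τ) T := by
        refine Finset.mem_filter.mpr ⟨(hmemlink _).mpr ⟨?_, ?_, ?_⟩, ?_⟩
        · exact hdc _ hxins _ (Finset.insert_subset_insert x Finset.subset_union_left)
        · exact Finset.disjoint_insert_left.mpr ⟨hxτ, h₁d⟩
        · rw [Finset.insert_union]; exact hxins
        · exact Finset.insert_subset (h₂T hxρ₂) h₁T
      have := h₁.2 _ hmem (Finset.subset_insert x ρ₁)
      exact hxρ₁ (this ▸ Finset.mem_insert_self x ρ₁)
    rcases Nat.lt_trichotomy ρ₁.card ρ₂.card with h | h | h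
    · exact key ρ₁ ρ₂ h₁ h₂ h
    · exact hne h
    · exact key ρ₂ ρ₁ h₂ h₁ h

private lemma matroid_pure {I : Finset α} {S : Finset (Finset α)}
    (hS : IsMatroidComplex I S) : IsPure S := by
  have := hS.2.2.2 I subset_rfl
  rwa [restrict_eq_self hS.2.1] at this

private lemma toFinset_drop_eq_s12 (w : List α) (hw : w.Nodup) (k : ℕ) :
    (w.drop k).toFinset = w.toFinset \ (w.take k).toFinset := by
  ext a
  simp only [Finset.mem_sdiff, List.mem_toFinset]
  constructor
  · intro h
    refine ⟨List.mem_of_mem_drop h, fun hmem => ?_⟩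
    have hdisj := List.disjoint_take_drop hw (le_refl k)
    exact hdisj hmem h
  · rintro ⟨h1, h2⟩
    rcases List.mem_append.mp (by rw [List.take_append_drop]; exact h1 :
        a ∈ w.take k ++ w.drop k) with h | h
    · exact absurd h h2
    · exact h

private lemma matroid_decomposable_aux :
    ∀ n (w : List α), w.length ≤ n → w.Nodup →
      ∀ S : Finset (Finset α), IsMatroidComplex w.toFinset S → OrderDecomposable w S := by
  intro n
  induction n with
  | zero =>
    intro w hlen hw S hS
    exact OrderDecomposable.pure w S (matroid_pure hS)
      (fun k hk hk' => by omega) (fun k hk hk' => by omega)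
      (fun k hk hk' => by omega) (fun k hk hk' => by omega)
  | succ n IH =>
    intro w hlen hw S hS
    have hAsub : ∀ k : ℕ, (w.take k).toFinset ⊆ w.toFinset := by
      intro k a ha
      simp only [List.mem_toFinset] at ha ⊢
      exact List.mem_of_mem_take ha
    have hresM : ∀ k : ℕ, IsMatroidComplex (w.take k).toFinset
        (restrictC S (w.take k).toFinset) := fun k => restrict_matroid hS (hAsub k)
    have hfacet : ∀ k : ℕ, IsFacet (restrictC S (w.take k).toFinset)
        (lexMinFacet w (restrictC S (w.take k).toFinset)) := by
      intro k
      refine lexMinFacet_isFacet_s12 ?_ (hresM k).1 ?_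
      · intro σ hσ τ hτ
        obtain ⟨h1, h2⟩ := Finset.mem_filter.mp hσ
        exact Finset.mem_filter.mpr ⟨hS.2.2.1 σ h1 τ hτ, hτ.trans h2⟩
      · intro σ hσ
        exact ((hresM k).2.1 σ hσ).trans ((hAsub k).trans subset_rfl)
    have hconM : ∀ k : ℕ, IsMatroidComplex (w.toFinset \ (w.take k).toFinset)
        (contractC w S (w.take k).toFinset) := by
      intro k
      exact link_matroid hS (hAsub k) (hfacet k)
    refine OrderDecomposable.pure w S (matroid_pure hS) ?_ ?_ ?_ ?_
    · intro k hk hk'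
      exact matroid_pure (hresM k)
    · intro k hk hk'
      exact matroid_pure (hconM k)
    · intro k hk hk'
      refine IH (w.take k) ?_ (hw.sublist (List.take_sublist k w)) _ (hresM k)
      rw [List.length_take]; omega
    · intro k hk hk'
      have hM := hconM k
      rw [← toFinset_drop_eq_s12 w hw k] at hM
      refine IH (w.drop k) ?_ (hw.sublist (List.drop_sublist k w)) _ hM
      rw [List.length_drop]; omega

/-- Every ordered matroid complex is order-decomposable: if `Σ` is a matroid complex on a
finite set `I` and `w` is any linear order on `I`, then `(w, Σ)` is order-decomposable. -/
theorem orderDecomposable_of_matroid (w : List α) (hw : w.Nodup)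
    (S : Finset (Finset α)) (hS : IsMatroidComplex w.toFinset S) :
    OrderDecomposable w S :=
  matroid_decomposable_aux w.length w (le_refl _) hw S hS

end OrderedComplexes
end

section
/- For every preposet Q on [n], the union ⋃_{A ∈ C_Q} σ_A of the open braid cones over the album C_Q of Q is a closed convex set, and it equals the topological closure of ⋃_R σ_R, where R ranges over the set compositions corresponding to the linear extensions of Q. -/
namespace BraidFan

/-- A set composition of `[n]`: an ordered list of nonempty, pairwise disjoint subsets
(blocks) of `[n]` whose union is `[n]`. -/
def IsSetComp (n : ℕ) (A : List (Finset (Fin n))) : Prop :=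
  (∀ B ∈ A, B.Nonempty) ∧ A.Pairwise Disjoint ∧ A.foldr (· ∪ ·) ∅ = Finset.univ

/-- The index of the block of `A` containing `i`. -/
def blockIdx {n : ℕ} (A : List (Finset (Fin n))) (i : Fin n) : ℕ :=
  A.findIdx fun B => decide (i ∈ B)

/-- The open braid cone of a set composition `A`:
`σ_A = {x ∈ ℝ^n : x_i = x_j if i ≡_A j, and x_i < x_j if i ≺_A j}`. -/
def braidCone {n : ℕ} (A : List (Finset (Fin n))) : Set (Fin n → ℝ) :=
  {x | ∀ i j : Fin n,
    (blockIdx A i = blockIdx A j → x i = x j) ∧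
    (blockIdx A i < blockIdx A j → x i < x j)}

/-- `A` refines `B` (written `A ⊵ B`): every block of `B` is a union of consecutive blocks
of `A`, in order.  Formally, `A` can be split into consecutive nonempty chunks whose unions
are, in order, the blocks of `B`. -/
def Refines {n : ℕ} (A B : List (Finset (Fin n))) : Prop :=
  ∃ P : List (List (Finset (Fin n))), (∀ l ∈ P, l ≠ []) ∧ P.flatten = A ∧
    B = P.map fun l => l.foldr (· ∪ ·) ∅


/-- The `≡_Q`-equivalence class of `i` for a preposet (reflexive transitive relation) `Q`. -/
noncomputable def eqClass {n : ℕ} (Q : Fin n → Fin n → Prop) (i : Fin n) : Finset (Fin n) :=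
  @Finset.filter _ (fun j => Q i j ∧ Q j i) (Classical.decPred _) Finset.univ

/-- The album (closure) of a preposet `Q`:
`C_Q = {A : i ≼_Q j implies i ≼_A j}`. -/
def albumOf {n : ℕ} (Q : Fin n → Fin n → Prop) : Set (List (Finset (Fin n))) :=
  {A | IsSetComp n A ∧ ∀ i j, Q i j → blockIdx A i ≤ blockIdx A j}

/-- A linear extension of the preposet `Q`: a set composition whose blocks are exactly the
`≡_Q`-equivalence classes and whose order extends `Q`. -/
def IsLinExt {n : ℕ} (Q : Fin n → Fin n → Prop) (R : List (Finset (Fin n))) : Prop :=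
  IsSetComp n R ∧ (∀ B ∈ R, ∃ i, B = eqClass Q i) ∧
    ∀ i j, Q i j → blockIdx R i ≤ blockIdx R j

variable {n : ℕ} {P : Fin n → Fin n → Prop}

lemma mem_eqClass {n : ℕ} {Q : Fin n → Fin n → Prop} {i j : Fin n} :
    j ∈ eqClass Q i ↔ Q i j ∧ Q j i := by simp [eqClass]

lemma blockIdx_cons {n : ℕ} (B : Finset (Fin n)) (l : List (Finset (Fin n))) (i : Fin n) :
    blockIdx (B :: l) i = if i ∈ B then 0 else blockIdx l i + 1 := by
  unfold blockIdx
  rw [List.findIdx_cons]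
  by_cases h : i ∈ B <;> simp [h]

open Classical in
noncomputable def downCard {n : ℕ} (P : Fin n → Fin n → Prop) (s : Finset (Fin n)) (i : Fin n) : ℕ :=
  (s.filter (fun k => P k i)).card

noncomputable def minOf {n : ℕ} (P : Fin n → Fin n → Prop) (s : Finset (Fin n))
    (hs : s.Nonempty) : Fin n :=
  Classical.choose (Finset.exists_min_image s (downCard P s) hs)

lemma minOf_mem {n : ℕ} {P : Fin n → Fin n → Prop} {s : Finset (Fin n)} (hs : s.Nonempty) :
    minOf P s hs ∈ s :=
  (Classical.choose_spec (Finset.exists_min_image s (downCard P s) hs)).1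

lemma minOf_min {n : ℕ} {P : Fin n → Fin n → Prop} (hrefl : Reflexive P) (htrans : Transitive P)
    {s : Finset (Fin n)} (hs : s.Nonempty) :
    ∀ j ∈ s, P j (minOf P s hs) → P (minOf P s hs) j := by
  classical
  set i := minOf P s hs with hidef
  have hmin := (Classical.choose_spec (Finset.exists_min_image s (downCard P s) hs)).2
  intro j hj hji
  by_contra hij
  have hlt : downCard P s j < downCard P s i := by
    apply Finset.card_lt_card
    constructor
    · intro k hk
      simp only [downCard, Finset.mem_filter] at *
      exact ⟨hk.1, htrans hk.2 hji⟩
    · intro hsub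
      have hmem : i ∈ s.filter (fun k => P k i) := by
        simp [Finset.mem_filter, minOf_mem hs, hrefl i, hidef, hrefl (minOf P s hs)]
      have := hsub hmem
      simp only [Finset.mem_filter] at this
      exact hij this.2
  exact absurd (hmin j hj) (not_le.mpr hlt)

noncomputable def lin {n : ℕ} (P : Fin n → Fin n → Prop) : ℕ → Finset (Fin n) → List (Finset (Fin n))
  | 0, _ => []
  | (m+1), s =>
    if hs : s.Nonempty then
      (eqClass P (minOf P s hs) ∩ s) ::
        lin P m (s \ (eqClass P (minOf P s hs) ∩ s))
    else []

variable {n : ℕ} {P : Fin n → Fin n → Prop}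

lemma min_mem_class (hrefl : Reflexive P) {s : Finset (Fin n)} (hs : s.Nonempty) :
    minOf P s hs ∈ eqClass P (minOf P s hs) ∩ s := by
  simp [Finset.mem_inter, mem_eqClass, hrefl _, minOf_mem hs]

lemma card_sdiff_le (hrefl : Reflexive P) {s : Finset (Fin n)} (hs : s.Nonempty) {m : ℕ}
    (hcard : s.card ≤ m + 1) :
    (s \ (eqClass P (minOf P s hs) ∩ s)).card ≤ m := by
  have hCs : eqClass P (minOf P s hs) ∩ s ⊆ s := Finset.inter_subset_right
  have h1 : 1 ≤ (eqClass P (minOf P s hs) ∩ s).card :=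
    Finset.card_pos.mpr ⟨_, min_mem_class hrefl hs⟩
  have := Finset.card_sdiff_of_subset hCs
  omega

lemma lin_blocks_subset : ∀ m (s : Finset (Fin n)), ∀ B ∈ lin P m s, B ⊆ s := by
  intro m
  induction m with
  | zero => intro s B hB; simp [lin] at hB
  | succ m ih =>
    intro s B hB
    rw [lin] at hB
    split_ifs at hB with hs
    · rcases List.mem_cons.mp hB with h | h
      · exact h ▸ Finset.inter_subset_right
      · exact (ih _ B h).trans (Finset.sdiff_subset)
    · simp at hB

lemma lin_nonempty (hrefl : Reflexive P) :
    ∀ m (s : Finset (Fin n)), ∀ B ∈ lin P m s, B.Nonempty := by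
  intro m
  induction m with
  | zero => intro s B hB; simp [lin] at hB
  | succ m ih =>
    intro s B hB
    rw [lin] at hB
    split_ifs at hB with hs
    · rcases List.mem_cons.mp hB with h | h
      · exact h ▸ ⟨_, min_mem_class hrefl hs⟩
      · exact ih _ B h
    · simp at hB

lemma lin_union (hrefl : Reflexive P) :
    ∀ m (s : Finset (Fin n)), s.card ≤ m → (lin P m s).foldr (· ∪ ·) ∅ = s := by
  intro m
  induction m with
  | zero =>
    intro s hcard
    simp [lin]
    exact (Finset.card_eq_zero.mp (Nat.le_zero.mp hcard)).symm
  | succ m ih =>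
    intro s hcard
    rw [lin]
    split_ifs with hs
    · simp only [List.foldr_cons]
      rw [ih _ (card_sdiff_le hrefl hs hcard)]
      rw [Finset.union_sdiff_of_subset Finset.inter_subset_right]
    · simp [Finset.not_nonempty_iff_eq_empty.mp hs]

lemma lin_pairwise :
    ∀ m (s : Finset (Fin n)), (lin P m s).Pairwise Disjoint := by
  intro m
  induction m with
  | zero => intro s; simp [lin]
  | succ m ih =>
    intro s
    rw [lin]
    split_ifs with hs
    · refine List.pairwise_cons.mpr ⟨fun B hB => ?_, ih _⟩
      have := lin_blocks_subset m _ B hB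
      exact Finset.disjoint_left.mpr fun a ha hB' =>
        (Finset.mem_sdiff.mp (this hB')).2 ha
    · simp

/-- invariant: `s` is a union of equivalence classes. -/
def Inv (P : Fin n → Fin n → Prop) (s : Finset (Fin n)) : Prop :=
  ∀ i ∈ s, eqClass P i ⊆ s

lemma inv_sdiff (htrans : Transitive P) {s : Finset (Fin n)} (hinv : Inv P s) (i0 : Fin n) :
    Inv P (s \ (eqClass P i0 ∩ s)) := by
  intro j hj k hk
  rw [Finset.mem_sdiff] at hj ⊢
  rw [mem_eqClass] at hk
  refine ⟨hinv j hj.1 (mem_eqClass.mpr hk), fun hkC => ?_⟩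
  rw [Finset.mem_inter, mem_eqClass] at hkC
  exact hj.2 (Finset.mem_inter.mpr ⟨mem_eqClass.mpr
    ⟨htrans hkC.1.1 hk.2, htrans hk.1 hkC.1.2⟩, hj.1⟩)

lemma lin_blocks_eqClass (htrans : Transitive P) :
    ∀ m (s : Finset (Fin n)), Inv P s → ∀ B ∈ lin P m s, ∃ i, B = eqClass P i := by
  intro m
  induction m with
  | zero => intro s _ B hB; simp [lin] at hB
  | succ m ih =>
    intro s hinv B hB
    rw [lin] at hB
    split_ifs at hB with hs
    · rcases List.mem_cons.mp hB with h | h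
      · refine ⟨minOf P s hs, ?_⟩
        rw [h, Finset.inter_eq_left.mpr (hinv _ (minOf_mem hs))]
      · exact ih _ (inv_sdiff htrans hinv _) B h
    · simp at hB

lemma lin_mono (hrefl : Reflexive P) (htrans : Transitive P) :
    ∀ m (s : Finset (Fin n)), ∀ i ∈ s, ∀ j ∈ s, P i j →
      blockIdx (lin P m s) i ≤ blockIdx (lin P m s) j := by
  intro m
  induction m with
  | zero => intro s i _ j _ _; simp [lin, blockIdx]
  | succ m ih =>
    intro s i hi j hj hij
    rw [lin]
    split_ifs with hs
    · rw [blockIdx_cons, blockIdx_cons]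
      by_cases hjC : j ∈ eqClass P (minOf P s hs) ∩ s
      · have hiC : i ∈ eqClass P (minOf P s hs) ∩ s := by
          rw [Finset.mem_inter, mem_eqClass] at hjC ⊢
          have hii0 : P i (minOf P s hs) := htrans hij hjC.1.2
          exact ⟨⟨minOf_min hrefl htrans hs i hi hii0, hii0⟩, hi⟩
        simp [hiC, hjC]
      · by_cases hiC : i ∈ eqClass P (minOf P s hs) ∩ s
        · simp [hiC, hjC]
        · simp only [if_neg hiC, if_neg hjC, add_le_add_iff_right]
          exact ih _ i (Finset.mem_sdiff.mpr ⟨hi, hiC⟩) j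
            (Finset.mem_sdiff.mpr ⟨hj, hjC⟩) hij
    · simp [blockIdx]

lemma lin_eq_idx (hrefl : Reflexive P) (htrans : Transitive P) :
    ∀ m (s : Finset (Fin n)), s.card ≤ m → ∀ i ∈ s, ∀ j ∈ s,
      blockIdx (lin P m s) i = blockIdx (lin P m s) j → P i j ∧ P j i := by
  intro m
  induction m with
  | zero =>
    intro s hcard i hi _ _ _
    rw [Finset.card_eq_zero.mp (Nat.le_zero.mp hcard)] at hi
    simp at hi
  | succ m ih =>
    intro s hcard i hi j hj hidx
    have hs : s.Nonempty := ⟨i, hi⟩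
    rw [lin, dif_pos hs, blockIdx_cons, blockIdx_cons] at hidx
    by_cases hiC : i ∈ eqClass P (minOf P s hs) ∩ s <;>
      by_cases hjC : j ∈ eqClass P (minOf P s hs) ∩ s
    · rw [Finset.mem_inter, mem_eqClass] at hiC hjC
      exact ⟨htrans hiC.1.2 hjC.1.1, htrans hjC.1.2 hiC.1.1⟩
    · simp [hiC, hjC] at hidx
    · simp [hiC, hjC] at hidx
    · simp only [if_neg hiC, if_neg hjC, add_left_inj] at hidx
      exact ih _ (card_sdiff_le hrefl hs hcard) i (Finset.mem_sdiff.mpr ⟨hi, hiC⟩)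
        j (Finset.mem_sdiff.mpr ⟨hj, hjC⟩) hidx

lemma univ_card_le (n : ℕ) : (Finset.univ : Finset (Fin n)).card ≤ n := by
  simp

lemma lin_isSetComp (hrefl : Reflexive P) :
    IsSetComp n (lin P n Finset.univ) :=
  ⟨lin_nonempty hrefl n _, lin_pairwise n _, lin_union hrefl n _ (univ_card_le n)⟩

/-- the half-space intersection determined by `Q`. -/
def Sset {n : ℕ} (Q : Fin n → Fin n → Prop) : Set (Fin n → ℝ) :=
  {x | ∀ i j, Q i j → x i ≤ x j}

lemma isClosed_Sset {n : ℕ} (Q : Fin n → Fin n → Prop) : IsClosed (Sset Q) := by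
  have : Sset Q = ⋂ (i : Fin n), ⋂ (j : Fin n), ⋂ (_ : Q i j), {x : Fin n → ℝ | x i ≤ x j} := by
    ext x; simp [Sset]
  rw [this]
  exact isClosed_iInter fun i => isClosed_iInter fun j => isClosed_iInter fun _ =>
    isClosed_le (continuous_apply i) (continuous_apply j)

lemma convex_Sset {n : ℕ} (Q : Fin n → Fin n → Prop) : Convex ℝ (Sset Q) := by
  intro x hx y hy a b ha hb hab
  intro i j hQ
  simp only [Pi.add_apply, Pi.smul_apply, smul_eq_mul]
  exact add_le_add (mul_le_mul_of_nonneg_left (hx i j hQ) ha)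
    (mul_le_mul_of_nonneg_left (hy i j hQ) hb)

lemma union_album_eq {n : ℕ} (Q : Fin n → Fin n → Prop) :
    (⋃ A ∈ albumOf Q, braidCone A) = Sset Q := by
  apply Set.Subset.antisymm
  · rintro x hx i j hQ
    rw [Set.mem_iUnion₂] at hx
    obtain ⟨A, hA, hxA⟩ := hx
    rcases lt_or_eq_of_le (hA.2 i j hQ) with h | h
    · exact le_of_lt ((hxA i j).2 h)
    · exact le_of_eq ((hxA i j).1 h)
  · intro x hx
    set P0 : Fin n → Fin n → Prop := fun i j => x i ≤ x j with hP0
    have hrefl0 : Reflexive P0 := fun i => le_refl _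
    have htrans0 : Transitive P0 := fun _ _ _ h1 h2 => le_trans h1 h2
    set A := lin P0 n Finset.univ with hA
    rw [Set.mem_iUnion₂]
    refine ⟨A, ⟨lin_isSetComp hrefl0, fun i j hQ =>
      lin_mono hrefl0 htrans0 n _ i (Finset.mem_univ i) j (Finset.mem_univ j) (hx i j hQ)⟩,
      fun i j => ⟨fun heq => ?_, fun hlt => ?_⟩⟩
    · have := lin_eq_idx hrefl0 htrans0 n _ (univ_card_le n) i (Finset.mem_univ i)
        j (Finset.mem_univ j) heq
      exact le_antisymm this.1 this.2
    · by_contra hle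
      push_neg at hle
      have := lin_mono hrefl0 htrans0 n (Finset.univ) j (Finset.mem_univ j)
        i (Finset.mem_univ i) hle
      rw [← hA] at this
      omega

lemma linext_subset_Sset {n : ℕ} (Q : Fin n → Fin n → Prop) :
    (⋃ R ∈ {R | IsLinExt Q R}, braidCone R) ⊆ Sset Q := by
  rintro x hx i j hQ
  rw [Set.mem_iUnion₂] at hx
  obtain ⟨R, hR, hxR⟩ := hx
  rcases lt_or_eq_of_le (hR.2.2 i j hQ) with h | h
  · exact le_of_lt ((hxR i j).2 h)
  · exact le_of_eq ((hxR i j).1 h)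

lemma Sset_subset_closure {n : ℕ} (Q : Fin n → Fin n → Prop)
    (hrefl : Reflexive Q) (htrans : Transitive Q) :
    Sset Q ⊆ closure (⋃ R ∈ {R | IsLinExt Q R}, braidCone R) := by
  intro x hx
  set Px : Fin n → Fin n → Prop := fun i j => x i < x j ∨ (x i = x j ∧ Q i j) with hPx
  have hreflP : Reflexive Px := fun i => Or.inr ⟨rfl, hrefl i⟩
  have htransP : Transitive Px := by
    rintro a b c (h1 | ⟨e1, q1⟩) (h2 | ⟨e2, q2⟩)
    · exact Or.inl (lt_trans h1 h2)
    · exact Or.inl (e2 ▸ h1)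
    · exact Or.inl (e1 ▸ h2)
    · exact Or.inr ⟨e1.trans e2, htrans q1 q2⟩
  have hxQ : ∀ i j, Q i j → x i ≤ x j := hx
  have hPx_of_Q : ∀ i j, Q i j → Px i j := by
    intro i j hQ
    rcases lt_or_eq_of_le (hxQ i j hQ) with h | h
    · exact Or.inl h
    · exact Or.inr ⟨h, hQ⟩
  have hequiv : ∀ i j, Px i j → Px j i → x i = x j ∧ (Q i j ∧ Q j i) := by
    rintro i j (h1 | ⟨e1, q1⟩) (h2 | ⟨e2, q2⟩)
    · exact absurd h2 (not_lt.mpr (le_of_lt h1))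
    · exact absurd h1 (not_lt.mpr (le_of_eq e2))
    · exact absurd h2 (not_lt.mpr (le_of_eq e1))
    · exact ⟨e1, q1, q2⟩
  have heqClass : ∀ i, eqClass Px i = eqClass Q i := by
    intro i
    ext k
    rw [mem_eqClass, mem_eqClass]
    constructor
    · rintro ⟨h1, h2⟩; exact (hequiv i k h1 h2).2
    · rintro ⟨q1, q2⟩; exact ⟨hPx_of_Q _ _ q1, hPx_of_Q _ _ q2⟩
  set R := lin Px n Finset.univ with hR
  have hRlin : IsLinExt Q R := by
    refine ⟨lin_isSetComp hreflP, fun B hB => ?_, fun i j hQ =>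
      lin_mono hreflP htransP n _ i (Finset.mem_univ i) j (Finset.mem_univ j)
        (hPx_of_Q i j hQ)⟩
    obtain ⟨i, hi⟩ := lin_blocks_eqClass htransP n Finset.univ
      (fun _ _ _ _ => Finset.mem_univ _) B hB
    exact ⟨i, hi.trans (heqClass i)⟩
  rw [Metric.mem_closure_iff]
  intro ε hε
  set L : ℕ := R.length with hL
  set δ : ℝ := ε / (2 * (L + 1)) with hδ
  have hδpos : 0 < δ := by positivity
  set y : Fin n → ℝ := fun i => x i + δ * (blockIdx R i : ℝ) with hy
  have hyR : y ∈ braidCone R := by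
    intro i j
    constructor
    · intro heq
      have := lin_eq_idx hreflP htransP n _ (univ_card_le n) i (Finset.mem_univ i)
        j (Finset.mem_univ j) heq
      have hxe : x i = x j := (hequiv i j this.1 this.2).1
      simp only [hy, hxe, heq]
    · intro hlt
      have hxle : x i ≤ x j := by
        by_contra hle
        push_neg at hle
        have := lin_mono hreflP htransP n (Finset.univ) j (Finset.mem_univ j)
          i (Finset.mem_univ i) (Or.inl hle)
        rw [← hR] at this
        omega
      have : δ * (blockIdx R i : ℝ) < δ * (blockIdx R j : ℝ) :=
        mul_lt_mul_of_pos_left (Nat.cast_lt.mpr hlt) hδpos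
      simp only [hy]
      linarith
  refine ⟨y, Set.mem_biUnion hRlin hyR, ?_⟩
  rw [dist_pi_lt_iff hε]
  intro b
  have hidx : (blockIdx R b : ℝ) ≤ (L : ℝ) := by
    exact_mod_cast List.findIdx_le_length
  have hdist : dist (x b) (y b) = δ * (blockIdx R b : ℝ) := by
    rw [Real.dist_eq]
    simp only [hy]
    rw [abs_sub_comm]
    rw [show x b + δ * (blockIdx R b : ℝ) - x b = δ * (blockIdx R b : ℝ) by ring]
    exact abs_of_nonneg (by positivity)
  rw [hdist]
  have h2 : δ * ((L : ℝ) + 1) = ε / 2 := by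
    rw [hδ]
    field_simp
  nlinarith [hδpos.le, hidx]


/-- For every preposet `Q` on `[n]`, the union of the open braid cones over the album `C_Q`
is a closed convex set, and it equals the topological closure of the union of the cones of
the linear extensions of `Q`. -/
theorem album_union_closed_convex (n : ℕ) (Q : Fin n → Fin n → Prop)
    (hrefl : Reflexive Q) (htrans : Transitive Q) :
    IsClosed (⋃ A ∈ albumOf Q, braidCone A) ∧
    Convex ℝ (⋃ A ∈ albumOf Q, braidCone A) ∧
    (⋃ A ∈ albumOf Q, braidCone A) =
      closure (⋃ R ∈ {R | IsLinExt Q R}, braidCone R) := by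
  rw [union_album_eq Q]
  refine ⟨isClosed_Sset Q, convex_Sset Q, Set.Subset.antisymm ?_ ?_⟩
  · exact Sset_subset_closure Q hrefl htrans
  · exact closure_minimal (linext_subset_Sset Q) (isClosed_Sset Q)

end BraidFan
end
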